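/- arXiv:2006.15143 — 11 statements merged into one kernel-verified Lean document; each statement's English description precedes it below -/
import Mathlib

section
/- Let g : ℝ → ℝ be of class C⁴ and fix x ∈ ℝ. Then the mass-matrix combination satisfies (1/24)·(g(x−h) + 22·g(x) + g(x+h)) − (1/h)·∫_{x−h/2}^{x+h/2} g(ξ) dξ = O(h⁴) as h → 0⁺. -/
open Asymptotics Filter Set MeasureTheory

lemma peel {f : ℝ → ℝ} {n : ℕ} (h : ContDiff ℝ ((n : ℕ∞) + 1) f) :
    Differentiable ℝ f ∧ ContDiff ℝ (n : ℕ∞) (deriv f) := by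
  rw [show ((n : ℕ∞) + 1 : WithTop ℕ∞) = (n : WithTop ℕ∞) + 1 by push_cast; rfl,
    contDiff_succ_iff_deriv] at h
  exact ⟨h.1, h.2.2⟩

lemma stepO {f f' : ℝ → ℝ} (hd : ∀ t, HasDerivAt f (f' t) t) (h0 : f 0 = 0) {k : ℕ}
    (hO : f' =O[nhds 0] fun t => |t| ^ k) : f =O[nhds 0] fun t => |t| ^ (k + 1) := by
  obtain ⟨C, hC⟩ := hO.bound
  rw [Metric.eventually_nhds_iff] at hC
  obtain ⟨δ, hδ, hball⟩ := hC
  rw [isBigO_iff]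
  refine ⟨|C|, ?_⟩
  rw [Metric.eventually_nhds_iff]
  refine ⟨δ, hδ, fun t ht => ?_⟩
  have habs : ∀ s ∈ uIcc (0:ℝ) t, |s| ≤ |t| := by
    intro s hs
    rcases le_total 0 t with h | h
    · rw [uIcc_of_le h] at hs; rw [abs_of_nonneg hs.1, abs_of_nonneg h]; exact hs.2
    · rw [uIcc_of_ge h] at hs
      rw [abs_of_nonpos hs.2, abs_of_nonpos h]
      linarith [hs.1]
  have key := Convex.norm_image_sub_le_of_norm_hasDerivWithin_le
    (f := f) (f' := f') (C := |C| * |t| ^ k) (s := uIcc (0:ℝ) t)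
    (fun s hs => (hd s).hasDerivWithinAt)
    (fun s hs => by
      have h1 : ‖f' s‖ ≤ C * ‖|s| ^ k‖ := by
        apply hball
        simp only [dist_zero_right, Real.norm_eq_abs]
        calc |s| ≤ |t| := habs s hs
          _ < δ := by simpa [dist_zero_right] using ht
      have h2 : C * ‖|s| ^ k‖ ≤ |C| * |t| ^ k := by
        have : ‖|s| ^ k‖ = |s| ^ k := by
          rw [Real.norm_eq_abs, abs_of_nonneg (pow_nonneg (abs_nonneg s) k)]
        rw [this]
        calc C * |s| ^ k ≤ |C| * |s| ^ k := by
              apply mul_le_mul_of_nonneg_right (le_abs_self C) (pow_nonneg (abs_nonneg s) k)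
          _ ≤ |C| * |t| ^ k := by
              apply mul_le_mul_of_nonneg_left (pow_le_pow_left₀ (abs_nonneg s) (habs s hs) k)
                (abs_nonneg C)
      exact h1.trans h2)
    (convex_uIcc 0 t) left_mem_uIcc right_mem_uIcc
  calc ‖f t‖ = ‖f t - f 0‖ := by rw [h0, sub_zero]
    _ ≤ |C| * |t| ^ k * ‖t - 0‖ := key
    _ = |C| * ‖|t| ^ (k+1)‖ := by
        rw [sub_zero, Real.norm_eq_abs, Real.norm_eq_abs,
          abs_of_nonneg (pow_nonneg (abs_nonneg t) (k+1)), pow_succ]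
        ring

theorem quick_mass_matrix_cell_average (g : ℝ → ℝ) (hg : ContDiff ℝ 4 g) (x : ℝ) :
    (fun h : ℝ => (1 / 24) * (g (x - h) + 22 * g x + g (x + h))
        - (1 / h) * (∫ ξ in (x - h / 2)..(x + h / 2), g ξ))
      =O[nhdsWithin 0 (Set.Ioi 0)] fun h : ℝ => h ^ 4 := by
  have p0 := peel (n := 3) (f := g) (by norm_num; exact hg)
  have p1 := peel (n := 2) (f := deriv g) (by norm_num; exact_mod_cast p0.2)
  have p2 := peel (n := 1) (f := deriv (deriv g)) (by norm_num; exact_mod_cast p1.2)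
  have hd3 : Differentiable ℝ (deriv (deriv (deriv g))) :=
    p2.2.differentiable (by norm_num)
  set b := deriv g x with hb
  set c := deriv (deriv g) x with hc
  set d := deriv (deriv (deriv g)) x with hd
  set R : ℝ → ℝ := fun t => g (x + t) - (g x + b*t + c*t^2/2 + d*t^3/6) with hRdef
  set R1 : ℝ → ℝ := fun t => deriv g (x + t) - (b + c*t + d*t^2/2) with hR1def
  set R2 : ℝ → ℝ := fun t => deriv (deriv g) (x + t) - (c + d*t) with hR2def
  set R3 : ℝ → ℝ := fun t => deriv (deriv (deriv g)) (x + t) - d with hR3def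
  -- big-O of R3
  have hO3 : R3 =O[nhds 0] fun t => |t| ^ 1 := by
    have h1 : (fun y => deriv (deriv (deriv g)) y - d) =O[nhds x] fun y => y - x :=
      (hd3 x).isBigO_sub
    have h2 : Tendsto (fun t : ℝ => x + t) (nhds 0) (nhds x) := by
      simpa using (continuous_add_left x).tendsto (0:ℝ)
    have h3 := h1.comp_tendsto h2
    simp only [Function.comp_def, add_sub_cancel_left] at h3
    refine h3.trans ?_
    apply IsBigO.of_bound 1
    filter_upwards with t
    simp [Real.norm_eq_abs, abs_abs]
  have hO2 : R2 =O[nhds 0] fun t => |t| ^ 2 := by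
    refine stepO (f' := R3) (fun t => ?_) (by simp [hR2def, hc]) hO3
    have h1 : HasDerivAt (fun t => deriv (deriv g) (x + t))
        (deriv (deriv (deriv g)) (x + t)) t :=
      HasDerivAt.comp_const_add x t ((p2.1 (x + t)).hasDerivAt)
    have h2 : HasDerivAt (fun t : ℝ => c + d*t) d t := by
      simpa using ((hasDerivAt_id t).const_mul d).const_add c
    exact h1.sub h2
  have hO1 : R1 =O[nhds 0] fun t => |t| ^ 3 := by
    refine stepO (f' := R2) (fun t => ?_) (by simp [hR1def, hb]) hO2
    have h1 : HasDerivAt (fun t => deriv g (x + t)) (deriv (deriv g) (x + t)) t :=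
      HasDerivAt.comp_const_add x t ((p1.1 (x + t)).hasDerivAt)
    have h2 : HasDerivAt (fun t : ℝ => b + c*t + d*t^2/2) (c + d*t) t := by
      have := (((hasDerivAt_id t).const_mul c).const_add b).add
        (((hasDerivAt_pow 2 t).const_mul d).div_const 2)
      exact this.congr_deriv (by push_cast; ring)
    exact h1.sub h2
  have hOR : R =O[nhds 0] fun t => |t| ^ 4 := by
    refine stepO (f' := R1) (fun t => ?_) (by simp [hRdef]) hO1
    have h1 : HasDerivAt (fun t => g (x + t)) (deriv g (x + t)) t :=
      HasDerivAt.comp_const_add x t ((p0.1 (x + t)).hasDerivAt)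
    have h2 : HasDerivAt (fun t : ℝ => g x + b*t + c*t^2/2 + d*t^3/6)
        (b + c*t + d*t^2/2) t := by
      have := ((((hasDerivAt_id t).const_mul b).const_add (g x)).add
        (((hasDerivAt_pow 2 t).const_mul c).div_const 2)).add
        (((hasDerivAt_pow 3 t).const_mul d).div_const 6)
      exact this.congr_deriv (by push_cast; ring)
    exact h1.sub h2
  -- extract constant
  obtain ⟨C, hC⟩ := hOR.bound
  rw [Metric.eventually_nhds_iff] at hC
  obtain ⟨δ, hδ, hball⟩ := hC
  have hCbd : ∀ t : ℝ, |t| < δ → |R t| ≤ |C| * t ^ 4 := by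
    intro t ht
    have h1 := hball (y := t) (by simpa [dist_zero_right] using ht)
    have h2 : ‖|t| ^ 4‖ = t ^ 4 := by
      rw [Real.norm_eq_abs, abs_of_nonneg (pow_nonneg (abs_nonneg t) 4), ← abs_pow,
        abs_of_nonneg (by positivity)]
    rw [Real.norm_eq_abs, h2] at h1
    calc |R t| ≤ C * t ^ 4 := h1
      _ ≤ |C| * t ^ 4 := mul_le_mul_of_nonneg_right (le_abs_self C) (by positivity)
  -- continuity facts
  have hRcont : Continuous R := by
    apply Continuous.sub
    · exact hg.continuous.comp (continuous_const.add continuous_id)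
    · fun_prop
  rw [isBigO_iff]
  refine ⟨|C|, ?_⟩
  filter_upwards [Ioo_mem_nhdsGT_of_mem (Set.left_mem_Ico.mpr hδ)] with h hh
  obtain ⟨hh0, hhδ⟩ := hh
  have hne : h ≠ 0 := ne_of_gt hh0
  -- integral computation
  have hshift : (∫ ξ in (x - h / 2)..(x + h / 2), g ξ)
      = ∫ t in (-(h/2))..(h/2), g (t + x) := by
    rw [intervalIntegral.integral_comp_add_right (fun ξ => g ξ) x]
    norm_num [sub_eq_add_neg, add_comm]
  have hRint : IntervalIntegrable R volume (-(h/2)) (h/2) :=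
    hRcont.intervalIntegrable _ _
  have hPint : IntervalIntegrable (fun t : ℝ => g x + b*t + c*t^2/2 + d*t^3/6)
      volume (-(h/2)) (h/2) := (by fun_prop : Continuous _).intervalIntegrable _ _
  have hsplit : (∫ t in (-(h/2))..(h/2), g (t + x))
      = (∫ t in (-(h/2))..(h/2), R t)
        + ∫ t in (-(h/2))..(h/2), (g x + b*t + c*t^2/2 + d*t^3/6) := by
    rw [← intervalIntegral.integral_add hRint hPint]
    apply intervalIntegral.integral_congr
    intro t _
    simp [hRdef, add_comm t x]
  have hPval : (∫ t in (-(h/2))..(h/2), (g x + b*t + c*t^2/2 + d*t^3/6))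
      = g x * h + c * h^3 / 24 := by
    have hF : ∀ t : ℝ, HasDerivAt
        (fun t => g x * t + b * t^2/2 + c * t^3/6 + d * t^4/24)
        (g x + b*t + c*t^2/2 + d*t^3/6) t := by
      intro t
      have := ((((hasDerivAt_id t).const_mul (g x)).add
        (((hasDerivAt_pow 2 t).const_mul b).div_const 2)).add
        (((hasDerivAt_pow 3 t).const_mul c).div_const 6)).add
        (((hasDerivAt_pow 4 t).const_mul d).div_const 24)
      exact this.congr_deriv (by push_cast; ring)
    rw [intervalIntegral.integral_eq_sub_of_hasDerivAt (fun t _ => hF t) hPint]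
    ring
  -- bound on ∫ R
  have hIRbd : |∫ t in (-(h/2))..(h/2), R t| ≤ |C| * (h/2)^4 * h := by
    have := intervalIntegral.norm_integral_le_of_norm_le_const
      (C := |C| * (h/2)^4) (f := R) (a := -(h/2)) (b := h/2) ?_
    · rw [Real.norm_eq_abs] at this
      calc |∫ t in (-(h/2))..(h/2), R t| ≤ |C| * (h/2)^4 * |h/2 - -(h/2)| := this
        _ = |C| * (h/2)^4 * h := by
            have e : h/2 - -(h/2) = h := by ring
            rw [e, abs_of_pos hh0]
    · intro t ht
      rw [Set.uIoc_of_le (by linarith)] at ht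
      have h1 : |t| ≤ h/2 := abs_le.mpr ⟨le_of_lt ht.1, ht.2⟩
      have h2 : |t| < δ := lt_of_le_of_lt h1 (by linarith)
      calc ‖R t‖ = |R t| := rfl
        _ ≤ |C| * t ^ 4 := hCbd t h2
        _ ≤ |C| * (h/2)^4 := by
            apply mul_le_mul_of_nonneg_left _ (abs_nonneg C)
            calc t ^ 4 = |t| ^ 4 := by rw [← abs_pow, abs_of_nonneg (by positivity)]
              _ ≤ (h/2) ^ 4 := pow_le_pow_left₀ (abs_nonneg t) h1 4
  -- bounds on R h, R (-h)
  have hRh : |R h| ≤ |C| * h ^ 4 := by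
    have := hCbd h (by rwa [abs_of_pos hh0])
    simpa using this
  have hRmh : |R (-h)| ≤ |C| * h ^ 4 := by
    calc |R (-h)| ≤ |C| * (-h) ^ 4 := hCbd (-h) (by rwa [abs_neg, abs_of_pos hh0])
      _ = |C| * h ^ 4 := by ring
  -- the algebraic identity
  have hgph : g (x + h) = R h + (g x + b*h + c*h^2/2 + d*h^3/6) := by
    simp [hRdef]
  have hgmh : g (x - h) = R (-h) + (g x - b*h + c*h^2/2 - d*h^3/6) := by
    have : x - h = x + (-h) := by ring
    rw [this]; simp [hRdef]; ring
  have hIdent : (1 / 24) * (g (x - h) + 22 * g x + g (x + h))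
        - (1 / h) * (∫ ξ in (x - h / 2)..(x + h / 2), g ξ)
      = (R (-h) + R h) / 24 - (1/h) * (∫ t in (-(h/2))..(h/2), R t) := by
    rw [hshift, hsplit, hPval, hgph, hgmh]
    field_simp
    ring
  rw [hIdent]
  have hnorm4 : ‖h ^ 4‖ = h ^ 4 := by
    rw [Real.norm_eq_abs, abs_of_nonneg (by positivity)]
  rw [Real.norm_eq_abs, hnorm4]
  have habs : |(R (-h) + R h) / 24 - (1/h) * (∫ t in (-(h/2))..(h/2), R t)|
      ≤ (|R (-h)| + |R h|) / 24 + (1/h) * |∫ t in (-(h/2))..(h/2), R t| := by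
    calc |(R (-h) + R h) / 24 - (1/h) * (∫ t in (-(h/2))..(h/2), R t)|
        ≤ |(R (-h) + R h) / 24| + |(1/h) * (∫ t in (-(h/2))..(h/2), R t)| :=
          abs_sub (_) (_)
      _ ≤ (|R (-h)| + |R h|) / 24 + (1/h) * |∫ t in (-(h/2))..(h/2), R t| := by
          rw [abs_div, abs_mul]
          gcongr
          · exact abs_add_le _ _
          · norm_num
          · rw [abs_of_pos (by positivity : (0:ℝ) < 1/h)]
  refine habs.trans ?_
  have hCpos : (0:ℝ) ≤ |C| := abs_nonneg C
  have h4 : (1/h) * |∫ t in (-(h/2))..(h/2), R t| ≤ |C| * h^4 / 16 := by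
    calc (1/h) * |∫ t in (-(h/2))..(h/2), R t| ≤ (1/h) * (|C| * (h/2)^4 * h) := by
          apply mul_le_mul_of_nonneg_left hIRbd (by positivity)
      _ = |C| * h^4 / 16 * (h * (1/h)) := by ring
      _ = |C| * h^4 / 16 := by rw [mul_one_div_cancel hne, mul_one]
  nlinarith [pow_nonneg (le_of_lt hh0) 4]
end

section
/- Let u : ℝ → ℝ be of class C⁴ and fix x ∈ ℝ. For the QUICK interpolation (κ = 1/2), the average of the left and right interpolated values at the right face is fourth-order accurate: (uL(u,h) + uR(u,h))/2 − u(x + h/2) = O(h⁴) as h → 0⁺ (cubic exactness of the averaged QUICK interpolation on a uniform grid). -/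
open Asymptotics Filter Set MeasureTheory

noncomputable def uL (κ x : ℝ) (v : ℝ → ℝ) (h : ℝ) : ℝ :=
  (v x + v (x + h)) / 2 - ((1 - κ) / 4) * (v (x + h) - 2 * v x + v (x - h))

noncomputable def uR (κ x : ℝ) (v : ℝ → ℝ) (h : ℝ) : ℝ :=
  (v (x + h) + v x) / 2 - ((1 - κ) / 4) * (v (x + 2 * h) - 2 * v (x + h) + v x)

/-- Left-face interpolated value from the left: same formula with `x` replaced by `x - h`. -/
noncomputable def uLm (κ x : ℝ) (v : ℝ → ℝ) (h : ℝ) : ℝ := uL κ (x - h) v h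

/-- Left-face interpolated value from the right: same formula with `x` replaced by `x - h`. -/
noncomputable def uRm (κ x : ℝ) (v : ℝ → ℝ) (h : ℝ) : ℝ := uR κ (x - h) v h

lemma quick_aux_idw_eq (f : ℝ → ℝ) (hf : ContDiff ℝ 4 f) {k : ℕ} (hk : k ≤ 4)
    {t : ℝ} (ht : t ∈ Set.Icc (0 : ℝ) 1) :
    iteratedDerivWithin k f (Set.Icc (0 : ℝ) 1) t = iteratedDeriv k f t := by
  have hf' : ContDiff ℝ ((4 : ℕ∞) : WithTop ℕ∞) f := by exact_mod_cast hf
  have h := (contDiff_iff_ftaylorSeries.mp hf').hasFTaylorSeriesUpToOn (Set.Icc (0 : ℝ) 1)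
  have h2 := h.eq_iteratedFDerivWithin_of_uniqueDiffOn (m := k) (by exact_mod_cast hk)
    (uniqueDiffOn_Icc one_pos) ht
  rw [iteratedDerivWithin_eq_iteratedFDerivWithin, iteratedDeriv_eq_iteratedFDeriv, ← h2]
  rfl

lemma quick_aux_expand (u : ℝ → ℝ) (hu : ContDiff ℝ 4 u) (x a : ℝ) :
    (fun h : ℝ => u (x + a * h) -
        ∑ k ∈ Finset.range 4, a ^ k * iteratedDeriv k u x / (k.factorial : ℝ) * h ^ k)
      =O[nhdsWithin 0 (Set.Ioi 0)] fun h : ℝ => h ^ 4 := by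
  set g : ℝ → ℝ := fun t => u (x + t) with hg
  have hgc' : ContDiff ℝ 4 g := hu.comp (contDiff_const.add contDiff_id)
  set f : ℝ → ℝ := fun t => u (x + a * t) with hfdef
  have hff : f = fun t => g (a * t) := rfl
  have hfc : ContDiff ℝ 4 f := hgc'.comp (contDiff_const.mul contDiff_id)
  have hd : ∀ k : ℕ, k ≤ 4 → iteratedDeriv k f 0 = a ^ k * iteratedDeriv k u x := by
    intro k hk
    have h1 : iteratedDeriv k f = fun t => a ^ k * iteratedDeriv k g (a * t) := by
      rw [hff]; exact iteratedDeriv_comp_const_mul (hgc'.of_le (by exact_mod_cast hk)) a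
    have h2 : iteratedDeriv k g = fun t => iteratedDeriv k u (x + t) :=
      iteratedDeriv_comp_const_add k u x
    rw [h1, h2]
    norm_num
  obtain ⟨C, hC⟩ := exists_taylor_mean_remainder_bound (zero_le_one (α := ℝ))
    (hfc.contDiffOn (s := Set.Icc (0:ℝ) 1)) (n := 3)
  rw [Asymptotics.isBigO_iff]
  refine ⟨C, ?_⟩
  filter_upwards [Ioc_mem_nhdsGT_of_mem (Set.mem_Ico.mpr ⟨le_refl (0:ℝ), zero_lt_one⟩)] with h hh
  have hmem : h ∈ Set.Icc (0 : ℝ) 1 := ⟨hh.1.le, hh.2⟩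
  have hbound := hC h hmem
  have htay : taylorWithinEval f 3 (Set.Icc (0:ℝ) 1) 0 h =
      ∑ k ∈ Finset.range 4, a ^ k * iteratedDeriv k u x / (k.factorial : ℝ) * h ^ k := by
    rw [taylor_within_apply]
    refine Finset.sum_congr rfl fun k hk => ?_
    have hk4 : k ≤ 4 := by
      have := Finset.mem_range.mp hk; omega
    rw [quick_aux_idw_eq f hfc hk4 (Set.left_mem_Icc.mpr zero_le_one), hd k hk4, smul_eq_mul]
    ring
  rw [htay] at hbound
  calc ‖u (x + a * h) - ∑ k ∈ Finset.range 4,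
        a ^ k * iteratedDeriv k u x / (k.factorial : ℝ) * h ^ k‖
      = ‖f h - ∑ k ∈ Finset.range 4,
        a ^ k * iteratedDeriv k u x / (k.factorial : ℝ) * h ^ k‖ := rfl
    _ ≤ C * (h - 0) ^ (3 + 1) := hbound
    _ = C * ‖h ^ 4‖ := by
        rw [sub_zero, Real.norm_eq_abs, abs_of_nonneg (by positivity)]
theorem quick_average_interpolation_fourth_order (u : ℝ → ℝ) (hu : ContDiff ℝ 4 u) (x : ℝ) :
    (fun h : ℝ => (uL (1 / 2) x u h + uR (1 / 2) x u h) / 2 - u (x + h / 2))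
      =O[nhdsWithin 0 (Set.Ioi 0)] fun h : ℝ => h ^ 4 := by
  set S : ℝ → ℝ → ℝ := fun a h =>
    ∑ k ∈ Finset.range 4, a ^ k * iteratedDeriv k u x / (k.factorial : ℝ) * h ^ k with hS
  have Em1 := quick_aux_expand u hu x (-1)
  have E0 := quick_aux_expand u hu x 0
  have E1 := quick_aux_expand u hu x 1
  have E2 := quick_aux_expand u hu x 2
  have Eh := quick_aux_expand u hu x (1 / 2)
  have big : (fun h : ℝ =>
      (-1/16) * (u (x + (-1) * h) - S (-1) h) + (9/16) * (u (x + 0 * h) - S 0 h)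
        + (9/16) * (u (x + 1 * h) - S 1 h) + (-1/16) * (u (x + 2 * h) - S 2 h)
        - (u (x + (1/2) * h) - S (1/2) h))
      =O[nhdsWithin 0 (Set.Ioi 0)] fun h : ℝ => h ^ 4 :=
    ((((Em1.const_mul_left (-1/16)).add (E0.const_mul_left (9/16))).add
      (E1.const_mul_left (9/16))).add (E2.const_mul_left (-1/16))).sub Eh
  have heq : (fun h : ℝ => (uL (1 / 2) x u h + uR (1 / 2) x u h) / 2 - u (x + h / 2))
      = (fun h : ℝ =>
      (-1/16) * (u (x + (-1) * h) - S (-1) h) + (9/16) * (u (x + 0 * h) - S 0 h)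
        + (9/16) * (u (x + 1 * h) - S 1 h) + (-1/16) * (u (x + 2 * h) - S 2 h)
        - (u (x + (1/2) * h) - S (1/2) h)) := by
    funext h
    have e1 : x + (-1 : ℝ) * h = x - h := by ring
    have e2 : x + (0 : ℝ) * h = x := by ring
    have e3 : x + (1 : ℝ) * h = x + h := by ring
    have e4 : x + (1/2 : ℝ) * h = x + h / 2 := by ring
    simp only [hS, uL, uR, Finset.sum_range_succ, Finset.sum_range_zero, e1, e2, e3, e4]
    norm_num [Nat.factorial]
    ring
  rw [heq]
  exact big
end

section
/- Let p : ℝ → ℝ be a polynomial function of degree at most 3. Then for every x ∈ ℝ and every h > 0, the average of the left and right QUICK interpolated values (κ = 1/2) at the right face is exact: (uL(p,h) + uR(p,h))/2 = p(x + h/2). -/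
open Asymptotics Filter Set MeasureTheory

theorem quick_average_cubic_exactness (p : Polynomial ℝ) (hp : p.natDegree ≤ 3)
    (x : ℝ) (h : ℝ) (hh : 0 < h) :
    (uL (1 / 2) x (fun ξ => p.eval ξ) h + uR (1 / 2) x (fun ξ => p.eval ξ) h) / 2
      = p.eval (x + h / 2) := by
  have heval : ∀ t : ℝ, p.eval t = ∑ i ∈ Finset.range 4, p.coeff i * t ^ i := fun t =>
    p.eval_eq_sum_range' (lt_of_le_of_lt hp (by norm_num)) t
  simp only [uL, uR, heval, Finset.sum_range_succ, Finset.sum_range_zero]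
  ring
end

section
/- Let f : ℝ → ℝ and u : ℝ → ℝ be of class C⁴ and fix x ∈ ℝ. For the QUICK interpolation (κ = 1/2), the averaged flux at the right face is fourth-order accurate for the nonlinear flux: (f(uL(u,h)) + f(uR(u,h)))/2 − f(u(x + h/2)) = O(h⁴) as h → 0⁺. -/
open Asymptotics Filter Set MeasureTheory

lemma seg_bound (ψ : ℝ → ℝ) (hψ : Differentiable ℝ ψ) (t C : ℝ)
    (hb : ∀ s ∈ Set.uIcc 0 t, |deriv ψ s| ≤ C) : |ψ t - ψ 0| ≤ C * |t| := by
  have := Convex.norm_image_sub_le_of_norm_deriv_le (s := Set.uIcc 0 t)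
    (fun s _ => hψ s) (fun s hs => by simpa using hb s hs) (convex_uIcc 0 t)
    (Set.left_mem_uIcc) (Set.right_mem_uIcc)
  simpa using this

lemma integrate_isBigO {φ : ℝ → ℝ} (hφ : Differentiable ℝ φ) (h0 : φ 0 = 0) {k : ℕ}
    (hd : (deriv φ) =O[nhds 0] fun t => t ^ k) :
    φ =O[nhds 0] fun t => t ^ (k + 1) := by
  obtain ⟨C, hC⟩ := hd.bound
  rw [Metric.eventually_nhds_iff] at hC
  obtain ⟨δ, hδ, hb⟩ := hC
  refine IsBigO.of_bound (max C 0) ?_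
  rw [Metric.eventually_nhds_iff]
  refine ⟨δ, hδ, fun t ht => ?_⟩
  have key : |φ t - φ 0| ≤ (max C 0 * |t| ^ k) * |t| := by
    apply seg_bound _ hφ
    intro s hs
    have hst : |s| ≤ |t| := by
      rcases Set.mem_uIcc.1 hs with h | h
      · rw [abs_of_nonneg h.1]; exact le_trans h.2 (le_abs_self t)
      · rw [abs_of_nonpos h.2]; exact le_trans (neg_le_neg h.1) (neg_le_abs t)
    have hsd : dist s 0 < δ := by
      simp only [Real.dist_eq, sub_zero] at ht ⊢; exact lt_of_le_of_lt hst ht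
    have := hb hsd
    simp only [Real.norm_eq_abs, abs_pow] at this
    calc |deriv φ s| ≤ C * |s| ^ k := this
      _ ≤ max C 0 * |t| ^ k := by
          rcases le_or_gt C 0 with h | h
          · have : C * |s| ^ k ≤ 0 := mul_nonpos_iff.2 (Or.inr ⟨h, by positivity⟩)
            exact le_trans this (by positivity)
          · exact mul_le_mul (le_max_left _ _) (pow_le_pow_left₀ (abs_nonneg s) hst k)
              (by positivity) (le_of_lt (lt_max_of_lt_left h))
  rw [h0, sub_zero] at key
  calc ‖φ t‖ ≤ max C 0 * |t| ^ k * |t| := key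
    _ = max C 0 * ‖t ^ (k+1)‖ := by
        rw [Real.norm_eq_abs, abs_pow, pow_succ]; ring

lemma cont_isBigO_one {F : ℝ → ℝ} (h : ContinuousAt F 0) :
    F =O[nhds (0:ℝ)] (fun _ => (1:ℝ)) := by
  rw [isBigO_one_iff]
  exact h.norm.isBoundedUnder_le

lemma poly_step {G P P' : ℝ → ℝ} (hG : Differentiable ℝ G)
    (hP : ∀ t, HasDerivAt P (P' t) t) (h0 : G 0 - P 0 = 0) {k : ℕ}
    (hd : (fun t => deriv G t - P' t) =O[nhds 0] fun t => t ^ k) :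
    (fun t => G t - P t) =O[nhds 0] fun t => t ^ (k + 1) := by
  have hdiff : Differentiable ℝ (fun t => G t - P t) :=
    hG.sub (fun t => (hP t).differentiableAt)
  have hder : deriv (fun t => G t - P t) = fun t => deriv G t - P' t := by
    funext t
    exact (((hG t).hasDerivAt).sub (hP t)).deriv
  exact integrate_isBigO hdiff h0 (hder ▸ hd)

lemma taylor4 (g : ℝ → ℝ) (hg : ContDiff ℝ 4 g) :
    (fun t => g t - (g 0 + deriv g 0 * t + deriv (deriv g) 0 * (t ^ 2 / 2)
      + deriv (deriv (deriv g)) 0 * (t ^ 3 / 6))) =O[nhds 0] fun t : ℝ => t ^ 4 := by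
  set g1 := deriv g with hg1
  set g2 := deriv g1 with hg2
  set g3 := deriv g2 with hg3
  have h4 : ContDiff ℝ (3+1) g := by exact_mod_cast hg
  rw [contDiff_succ_iff_deriv] at h4
  have hgdiff : Differentiable ℝ g := h4.1
  have h3 : ContDiff ℝ (2+1) g1 := by exact_mod_cast h4.2.2
  rw [contDiff_succ_iff_deriv] at h3
  have hg1diff : Differentiable ℝ g1 := h3.1
  have h2 : ContDiff ℝ (1+1) g2 := by exact_mod_cast h3.2.2
  rw [contDiff_succ_iff_deriv] at h2
  have hg2diff : Differentiable ℝ g2 := h2.1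
  have h1 : ContDiff ℝ (0+1) g3 := by exact_mod_cast h2.2.2
  rw [contDiff_succ_iff_deriv] at h1
  have hg3diff : Differentiable ℝ g3 := h1.1
  have hg4cont : Continuous (deriv g3) := (h1.2.2).continuous
  have E1 : (fun t => g3 t - g3 0) =O[nhds 0] fun t : ℝ => t ^ (0+1) := by
    refine poly_step hg3diff (fun t => hasDerivAt_const t (g3 0)) (by ring) ?_
    exact (cont_isBigO_one hg4cont.continuousAt).congr
      (fun t => (sub_zero _).symm) (fun t => (pow_zero t).symm)
  have E2 : (fun t => g2 t - (g2 0 + g3 0 * t)) =O[nhds 0] fun t : ℝ => t ^ (1+1) := by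
    have hP : ∀ t : ℝ, HasDerivAt (fun s : ℝ => g2 0 + g3 0 * s) (g3 0) t := fun t =>
      (((hasDerivAt_const t (g2 0)).add ((hasDerivAt_id t).const_mul (g3 0))).congr_deriv
        (by ring))
    refine poly_step hg2diff hP (by ring) ?_
    rw [← hg3]; simpa using E1
  have E3 : (fun t => g1 t - (g1 0 + g2 0 * t + g3 0 * (t ^ 2 / 2)))
      =O[nhds 0] fun t : ℝ => t ^ (2+1) := by
    have hP : ∀ t : ℝ, HasDerivAt (fun s : ℝ => g1 0 + g2 0 * s + g3 0 * (s ^ 2 / 2))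
        (g2 0 + g3 0 * t) t := fun t =>
      ((((hasDerivAt_const t (g1 0)).add ((hasDerivAt_id t).const_mul (g2 0))).add
        (((hasDerivAt_pow 2 t).div_const 2).const_mul (g3 0))).congr_deriv
        (by push_cast; ring))
    refine poly_step hg1diff hP (by ring) ?_
    rw [← hg2]; simpa using E2
  have E4 : (fun t => g t - (g 0 + g1 0 * t + g2 0 * (t ^ 2 / 2) + g3 0 * (t ^ 3 / 6)))
      =O[nhds 0] fun t : ℝ => t ^ (3+1) := by
    have hP : ∀ t : ℝ, HasDerivAt
        (fun s : ℝ => g 0 + g1 0 * s + g2 0 * (s ^ 2 / 2) + g3 0 * (s ^ 3 / 6))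
        (g1 0 + g2 0 * t + g3 0 * (t ^ 2 / 2)) t := fun t =>
      (((((hasDerivAt_const t (g 0)).add ((hasDerivAt_id t).const_mul (g1 0))).add
        (((hasDerivAt_pow 2 t).div_const 2).const_mul (g2 0))).add
        (((hasDerivAt_pow 3 t).div_const 6).const_mul (g3 0))).congr_deriv
        (by push_cast; ring))
    refine poly_step hgdiff hP (by ring) ?_
    rw [← hg1]; simpa using E3
  simpa using E4

lemma quad_bound (f : ℝ → ℝ) (hf : ContDiff ℝ 4 f) (y0 : ℝ) :
    ∃ L, 0 ≤ L ∧ ∀ y, |y - y0| ≤ 1 → ∀ t, |t| ≤ 1 →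
      |f (y + t) - f y - deriv f y * t| ≤ L * t ^ 2 := by
  have h4 : ContDiff ℝ (3+1) f := by exact_mod_cast hf
  rw [contDiff_succ_iff_deriv] at h4
  have hfdiff : Differentiable ℝ f := h4.1
  have h3 : ContDiff ℝ (2+1) (deriv f) := by exact_mod_cast h4.2.2
  rw [contDiff_succ_iff_deriv] at h3
  have hf1diff : Differentiable ℝ (deriv f) := h3.1
  have hf2cont : Continuous (deriv (deriv f)) := (h3.2.2).continuous
  obtain ⟨M, hM⟩ := (isCompact_Icc (a := y0 - 2) (b := y0 + 2)).exists_bound_of_continuousOn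
    hf2cont.continuousOn
  refine ⟨max M 0, le_max_right _ _, fun y hy t ht => ?_⟩
  set L := max M 0 with hL
  -- Step 1 : |f'(y+s) - f'(y)| ≤ L * |s| for |s| ≤ 1
  have step1 : ∀ s : ℝ, |s| ≤ 1 → |deriv f (y + s) - deriv f y| ≤ L * |s| := by
    intro s hs
    have hψ : ∀ r : ℝ, HasDerivAt (fun r : ℝ => deriv f (y + r)) (deriv (deriv f) (y + r)) r :=
      fun r => (hf1diff (y + r)).hasDerivAt.comp_const_add y r
    have := seg_bound (fun r => deriv f (y + r))
      (fun r => (hψ r).differentiableAt) s L ?_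
    · simpa using this
    · intro r hr
      rw [(hψ r).deriv]
      have hrs : |r| ≤ |s| := by
        rcases Set.mem_uIcc.1 hr with h | h
        · rw [abs_of_nonneg h.1]; exact le_trans h.2 (le_abs_self s)
        · rw [abs_of_nonpos h.2]; exact le_trans (neg_le_neg h.1) (neg_le_abs s)
      have hmem : y + r ∈ Set.Icc (y0 - 2) (y0 + 2) := by
        rw [Set.mem_Icc]
        constructor <;> [nlinarith [abs_le.1 hy, abs_le.1 (hrs.trans hs)];
          nlinarith [abs_le.1 hy, abs_le.1 (hrs.trans hs)]]
      exact le_trans (by simpa using hM _ hmem) (le_max_left _ _)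
  -- Step 2
  have hψ2 : ∀ s : ℝ, HasDerivAt (fun s : ℝ => f (y + s) - f y - deriv f y * s)
      (deriv f (y + s) - deriv f y) s := by
    intro s
    have h1 : HasDerivAt (fun s : ℝ => f (y + s)) (deriv f (y + s)) s :=
      (hfdiff (y + s)).hasDerivAt.comp_const_add y s
    exact (((h1.sub_const (f y)).sub ((hasDerivAt_id s).const_mul (deriv f y))).congr_deriv
      (by ring))
  have key := seg_bound (fun s : ℝ => f (y + s) - f y - deriv f y * s)
    (fun s => (hψ2 s).differentiableAt) t (L * |t|) ?_
  · have ht2 : |t| * |t| = t ^ 2 := by rw [← abs_mul, ← sq, abs_of_nonneg (sq_nonneg t)]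
    calc |f (y + t) - f y - deriv f y * t| = |(f (y+t) - f y - deriv f y * t) - (f (y+0) - f y - deriv f y * 0)| := by norm_num
      _ ≤ L * |t| * |t| := key
      _ = L * t ^ 2 := by rw [mul_assoc, ht2]
  · intro s hs
    rw [(hψ2 s).deriv]
    have hst : |s| ≤ |t| := by
      rcases Set.mem_uIcc.1 hs with h | h
      · rw [abs_of_nonneg h.1]; exact le_trans h.2 (le_abs_self t)
      · rw [abs_of_nonpos h.2]; exact le_trans (neg_le_neg h.1) (neg_le_abs t)
    calc |deriv f (y + s) - deriv f y| ≤ L * |s| := step1 s (hst.trans ht)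
      _ ≤ L * |t| := by
          have : (0:ℝ) ≤ L := le_max_right _ _
          nlinarith

lemma pow_isBigO_pow_nhds_zero {j k : ℕ} (hjk : k ≤ j) :
    (fun h : ℝ => h ^ j) =O[nhds 0] fun h : ℝ => h ^ k := by
  refine IsBigO.of_bound 1 ?_
  rw [Metric.eventually_nhds_iff]
  refine ⟨1, one_pos, fun t ht => ?_⟩
  simp only [Real.dist_eq, sub_zero] at ht
  rw [Real.norm_eq_abs, Real.norm_eq_abs, abs_pow, abs_pow, one_mul]
  exact pow_le_pow_of_le_one (abs_nonneg t) (le_of_lt ht) hjk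

theorem quick_averaged_flux_fourth_order (f u : ℝ → ℝ) (hf : ContDiff ℝ 4 f)
    (hu : ContDiff ℝ 4 u) (x : ℝ) :
    (fun h : ℝ => (f (uL (1 / 2) x u h) + f (uR (1 / 2) x u h)) / 2 - f (u (x + h / 2)))
      =O[nhdsWithin 0 (Set.Ioi 0)] fun h : ℝ => h ^ 4 := by
  apply IsBigO.mono _ nhdsWithin_le_nhds
  set g : ℝ → ℝ := fun t => u (x + t) with hgdef
  have hgC : ContDiff ℝ 4 g := hu.comp (contDiff_const.add contDiff_id)
  set c0 : ℝ := g 0 with hc0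
  set c1 : ℝ := deriv g 0 with hc1
  set c2 : ℝ := deriv (deriv g) 0 with hc2
  set c3 : ℝ := deriv (deriv (deriv g)) 0 with hc3
  set T : ℝ → ℝ := fun t => c0 + c1 * t + c2 * (t ^ 2 / 2) + c3 * (t ^ 3 / 6) with hT
  set E : ℝ → ℝ := fun t => g t - T t with hEdef
  have hE : E =O[nhds 0] fun t : ℝ => t ^ 4 := taylor4 g hgC
  -- composition with linear scaling
  have Ec : ∀ c : ℝ, (fun h : ℝ => E (c * h)) =O[nhds 0] fun h : ℝ => h ^ 4 := by
    intro c
    have hcont : Continuous (fun h : ℝ => c * h) := by continuity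
    have htend : Tendsto (fun h : ℝ => c * h) (nhds 0) (nhds 0) := by
      simpa using hcont.tendsto 0
    have h1 := hE.comp_tendsto htend
    have h2 : (fun h : ℝ => (c * h) ^ 4) =O[nhds 0] fun h : ℝ => h ^ 4 := by
      have : (fun h : ℝ => (c * h) ^ 4) = fun h : ℝ => c ^ 4 * h ^ 4 := by
        funext h; ring
      rw [this]
      exact (isBigO_refl _ _).const_mul_left _
    exact h1.trans h2
  have hEh : (fun h : ℝ => E h) =O[nhds 0] fun h : ℝ => h ^ 4 :=
    (Ec 1).congr (fun h => by norm_num) (fun h => rfl)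
  have hEneg : (fun h : ℝ => E (-h)) =O[nhds 0] fun h : ℝ => h ^ 4 :=
    (Ec (-1)).congr (fun h => by norm_num) (fun h => rfl)
  have hEhalf : (fun h : ℝ => E (h / 2)) =O[nhds 0] fun h : ℝ => h ^ 4 :=
    (Ec (1/2)).congr (fun h => by rw [one_div, inv_mul_eq_div]) (fun h => rfl)
  have hE2 : (fun h : ℝ => E (2 * h)) =O[nhds 0] fun h : ℝ => h ^ 4 := Ec 2
  -- expansion of u at shifted points
  have hu_exp : ∀ t : ℝ, u (x + t) = T t + E t := by
    intro t; simp [hEdef, hgdef]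
  have hux : u x = T 0 + E 0 := by
    have := hu_exp 0; rwa [add_zero] at this
  -- the deviations
  set m : ℝ → ℝ := fun h => u (x + h / 2) with hm
  set aL : ℝ → ℝ := fun h => uL (1/2) x u h - m h with haL
  set aR : ℝ → ℝ := fun h => uR (1/2) x u h - m h with haR
  set EL : ℝ → ℝ := fun h => (1/2) * (E 0 + E h) - (1/8) * (E h - 2 * E 0 + E (-h)) - E (h/2)
    with hEL
  set ER : ℝ → ℝ := fun h => (-(1/8)) * (E (2*h) - 2 * E h + E 0) + (1/2) * (E h + E 0) - E (h/2)
    with hER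
  have haLid : ∀ h : ℝ, aL h = c3 / 16 * h ^ 3 + EL h := by
    intro h
    rw [haL, hEL]
    simp only [uL, hm]
    rw [show x - h = x + (-h) by ring, hu_exp h, hu_exp (-h), hu_exp (h/2), hux, hT]
    ring
  have haRid : ∀ h : ℝ, aR h = -(c3 / 16) * h ^ 3 + ER h := by
    intro h
    rw [haR, hER]
    simp only [uR, hm]
    rw [hu_exp h, hu_exp (2*h), hu_exp (h/2), hux, hT]
    ring
  have hEL4 : EL =O[nhds 0] fun h : ℝ => h ^ 4 := by
    rw [hEL]
    have hE0 : (fun _ : ℝ => E 0) =O[nhds 0] fun h : ℝ => h ^ 4 := by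
      have : E 0 = 0 := by simp [hEdef, hT, hc0]
      rw [this]
      exact isBigO_zero _ _
    exact (((hE0.add hEh).const_mul_left (1/2)).sub
      (((hEh.sub (hE0.const_mul_left 2)).add hEneg).const_mul_left (1/8))).sub hEhalf
  have hER4 : ER =O[nhds 0] fun h : ℝ => h ^ 4 := by
    rw [hER]
    have hE0 : (fun _ : ℝ => E 0) =O[nhds 0] fun h : ℝ => h ^ 4 := by
      have : E 0 = 0 := by simp [hEdef, hT, hc0]
      rw [this]
      exact isBigO_zero _ _
    exact ((((hE2.sub (hEh.const_mul_left 2)).add hE0).const_mul_left (-(1/8))).add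
      ((hEh.add hE0).const_mul_left (1/2))).sub hEhalf
  have hpow43 := pow_isBigO_pow_nhds_zero (j := 4) (k := 3) (by norm_num)
  have haL3 : aL =O[nhds 0] fun h : ℝ => h ^ 3 := by
    have : aL = fun h => c3 / 16 * h ^ 3 + EL h := funext haLid
    rw [this]
    exact ((isBigO_refl (fun h : ℝ => h ^ 3) _).const_mul_left _).add (hEL4.trans hpow43)
  have haR3 : aR =O[nhds 0] fun h : ℝ => h ^ 3 := by
    have : aR = fun h => -(c3 / 16) * h ^ 3 + ER h := funext haRid
    rw [this]
    exact ((isBigO_refl (fun h : ℝ => h ^ 3) _).const_mul_left _).add (hER4.trans hpow43)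
  have hsum : (fun h => aL h + aR h) =O[nhds 0] fun h : ℝ => h ^ 4 := by
    have : (fun h => aL h + aR h) = fun h => EL h + ER h := by
      funext h; rw [haLid h, haRid h]; ring
    rw [this]
    exact hEL4.add hER4
  -- quadratic remainder
  obtain ⟨L, hL0, hLb⟩ := quad_bound f hf (u x)
  have hmtend : Tendsto m (nhds 0) (nhds (u x)) := by
    have hc : ContinuousAt m 0 :=
      (hu.continuous.comp (continuous_const.add (continuous_id.div_const 2))).continuousAt
    have : m 0 = u x := by simp [hm]
    rw [← this]
    exact hc
  have haLtend : Tendsto aL (nhds 0) (nhds 0) := by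
    have h3 : Tendsto (fun h : ℝ => h ^ 3) (nhds (0:ℝ)) (nhds 0) := by
      have := (continuous_pow 3 (M := ℝ)).tendsto 0
      simpa using this
    exact haL3.trans_tendsto h3
  have haRtend : Tendsto aR (nhds 0) (nhds 0) := by
    have h3 : Tendsto (fun h : ℝ => h ^ 3) (nhds (0:ℝ)) (nhds 0) := by
      have := (continuous_pow 3 (M := ℝ)).tendsto 0
      simpa using this
    exact haR3.trans_tendsto h3
  set RL : ℝ → ℝ := fun h => f (m h + aL h) - f (m h) - deriv f (m h) * aL h with hRL
  set RR : ℝ → ℝ := fun h => f (m h + aR h) - f (m h) - deriv f (m h) * aR h with hRR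
  have hev : ∀ᶠ h : ℝ in nhds 0, |m h - u x| ≤ 1 ∧ |aL h| ≤ 1 ∧ |aR h| ≤ 1 := by
    have h1 : ∀ᶠ h : ℝ in nhds 0, |m h - u x| ≤ 1 := by
      have := hmtend (Metric.closedBall_mem_nhds (u x) one_pos)
      filter_upwards [this] with h hh
      simpa [Real.dist_eq] using hh
    have h2 : ∀ᶠ h : ℝ in nhds 0, |aL h| ≤ 1 := by
      have := haLtend (Metric.closedBall_mem_nhds (0:ℝ) one_pos)
      filter_upwards [this] with h hh
      simpa [Real.dist_eq] using hh
    have h3 : ∀ᶠ h : ℝ in nhds 0, |aR h| ≤ 1 := by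
      have := haRtend (Metric.closedBall_mem_nhds (0:ℝ) one_pos)
      filter_upwards [this] with h hh
      simpa [Real.dist_eq] using hh
    filter_upwards [h1, h2, h3] with h a b c
    exact ⟨a, b, c⟩
  have hRLb : RL =O[nhds 0] fun h => aL h ^ 2 := by
    refine IsBigO.of_bound L ?_
    filter_upwards [hev] with h ⟨hm1, ha1, _⟩
    have := hLb (m h) hm1 (aL h) ha1
    calc ‖RL h‖ ≤ L * aL h ^ 2 := by simpa [hRL] using this
      _ = L * ‖aL h ^ 2‖ := by rw [Real.norm_eq_abs, abs_of_nonneg (sq_nonneg _)]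
  have hRRb : RR =O[nhds 0] fun h => aR h ^ 2 := by
    refine IsBigO.of_bound L ?_
    filter_upwards [hev] with h ⟨hm1, _, ha1⟩
    have := hLb (m h) hm1 (aR h) ha1
    calc ‖RR h‖ ≤ L * aR h ^ 2 := by simpa [hRR] using this
      _ = L * ‖aR h ^ 2‖ := by rw [Real.norm_eq_abs, abs_of_nonneg (sq_nonneg _)]
  have hpow64 := pow_isBigO_pow_nhds_zero (j := 6) (k := 4) (by norm_num)
  have haLsq : (fun h => aL h ^ 2) =O[nhds 0] fun h : ℝ => h ^ 4 := by
    have h33 : (fun h => aL h ^ 2) =O[nhds 0] fun h : ℝ => h ^ 6 :=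
      (haL3.mul haL3).congr (fun h => by ring) (fun h => by ring)
    exact h33.trans hpow64
  have haRsq : (fun h => aR h ^ 2) =O[nhds 0] fun h : ℝ => h ^ 4 := by
    have h33 : (fun h => aR h ^ 2) =O[nhds 0] fun h : ℝ => h ^ 6 :=
      (haR3.mul haR3).congr (fun h => by ring) (fun h => by ring)
    exact h33.trans hpow64
  have hRL4 : RL =O[nhds 0] fun h : ℝ => h ^ 4 := hRLb.trans haLsq
  have hRR4 : RR =O[nhds 0] fun h : ℝ => h ^ 4 := hRRb.trans haRsq
  have hfm : (fun h => deriv f (m h)) =O[nhds 0] (fun _ : ℝ => (1:ℝ)) := by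
    apply cont_isBigO_one
    have hderivC : Continuous (deriv f) := by
      have h4 : ContDiff ℝ (3+1) f := by exact_mod_cast hf
      rw [contDiff_succ_iff_deriv] at h4
      exact (h4.2.2).continuous
    exact (hderivC.comp
      (hu.continuous.comp (continuous_const.add (continuous_id.div_const 2)))).continuousAt
  have hX : (fun h => deriv f (m h) * (aL h + aR h)) =O[nhds 0] fun h : ℝ => h ^ 4 := by
    have h1 := hfm.mul hsum
    have h2 : (fun h : ℝ => (1:ℝ) * h ^ 4) = fun h : ℝ => h ^ 4 := by funext h; ring
    rw [h2] at h1
    exact h1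
  have hfinal := ((hRL4.add hRR4).add hX).const_mul_left (1/2 : ℝ)
  refine hfinal.congr_left fun h => ?_
  have e1 : m h + aL h = uL (1/2) x u h := by rw [haL]; ring
  have e2 : m h + aR h = uR (1/2) x u h := by rw [haR]; ring
  rw [hRL, hRR]
  simp only [e1, e2]
  rw [hm]
  ring
end

section
/- Let u : ℝ → ℝ be of class C⁴, fix x ∈ ℝ and κ ∈ ℝ. Then the difference of the interpolation jumps over the right face and the left face satisfies (uR(u,h) − uL(u,h)) − (uR⁻(u,h) − uL⁻(u,h)) = O(h⁴) as h → 0⁺, for every value of κ. -/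
open Asymptotics Filter Set MeasureTheory

/-- MVT step: if `g 0 = 0`, `g` is differentiable, and `deriv g = O(h^n)` at `0`,
then `g = O(h^(n+1))` at `0`. -/
lemma bigO_of_deriv_bigO {g : ℝ → ℝ} {n : ℕ} (hg : Differentiable ℝ g) (h0 : g 0 = 0)
    (hd : (deriv g) =O[nhds (0:ℝ)] fun h => h ^ n) :
    g =O[nhds (0:ℝ)] fun h : ℝ => h ^ (n + 1) := by
  obtain ⟨C, hC0, hC⟩ := hd.exists_nonneg
  rw [isBigOWith_iff] at hC
  rw [Metric.eventually_nhds_iff] at hC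
  obtain ⟨δ, hδ, hCb⟩ := hC
  rw [isBigO_iff]
  refine ⟨C, Metric.eventually_nhds_iff.2 ⟨δ, hδ, ?_⟩⟩
  intro h hh
  have hseg : ∀ t ∈ segment ℝ (0:ℝ) h, ‖t‖ ≤ ‖h‖ := by
    intro t ht
    obtain ⟨a, b, ha, hb, hab, rfl⟩ := ht
    simp only [smul_eq_mul, mul_zero, zero_add]
    rw [norm_mul]
    calc ‖b‖ * ‖h‖ ≤ 1 * ‖h‖ := by
          apply mul_le_mul_of_nonneg_right _ (norm_nonneg h)
          rw [Real.norm_eq_abs, abs_of_nonneg hb]; linarith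
      _ = ‖h‖ := one_mul _
  have bnd : ∀ t ∈ segment ℝ (0:ℝ) h, ‖deriv g t‖ ≤ C * ‖h‖ ^ n := by
    intro t ht
    have htδ : dist t 0 < δ := by
      rw [dist_zero_right]
      exact lt_of_le_of_lt (hseg t ht) (by rwa [← dist_zero_right])
    calc ‖deriv g t‖ ≤ C * ‖t ^ n‖ := hCb htδ
      _ = C * ‖t‖ ^ n := by rw [norm_pow]
      _ ≤ C * ‖h‖ ^ n := by
          apply mul_le_mul_of_nonneg_left _ hC0
          exact pow_le_pow_left₀ (norm_nonneg t) (hseg t ht) n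
  have key := (convex_segment (0:ℝ) h).norm_image_sub_le_of_norm_deriv_le
    (fun t _ => hg.differentiableAt) bnd (left_mem_segment ℝ 0 h) (right_mem_segment ℝ 0 h)
  rw [h0, sub_zero, sub_zero] at key
  calc ‖g h‖ ≤ C * ‖h‖ ^ n * ‖h‖ := key
    _ = C * ‖h ^ (n+1)‖ := by rw [norm_pow]; ring

/-- Taylor expansion with existential coefficients independent of the scaling `a`. -/
lemma taylor_scaled_bigO (n : ℕ) (u : ℝ → ℝ) (hu : ContDiff ℝ (n + 1) u) (x : ℝ) :
    ∃ d : ℕ → ℝ, ∀ a : ℝ,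
      (fun h : ℝ => u (x + a * h) - ∑ i ∈ Finset.range (n + 1), a ^ i * d i * h ^ i)
        =O[nhds (0:ℝ)] fun h : ℝ => h ^ (n + 1) := by
  induction n generalizing u with
  | zero =>
    refine ⟨fun _ => u x, fun a => ?_⟩
    have hdiff : Differentiable ℝ u := hu.differentiable (by norm_num)
    set g : ℝ → ℝ := fun h => u (x + a * h) - ∑ i ∈ Finset.range 1, a ^ i * u x * h ^ i with hg
    have hg_eq : g = fun h => u (x + a * h) - u x := by
      funext h; simp [hg]
    have hgdiff : Differentiable ℝ g := by
      rw [hg_eq]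
      exact (hdiff.comp (differentiable_const x |>.add ((differentiable_id).const_mul a))).sub_const _
    have hg0 : g 0 = 0 := by rw [hg_eq]; simp
    have hDa : ∀ h : ℝ, HasDerivAt g (a * deriv u (x + a * h)) h := by
      intro h
      rw [hg_eq]
      have hin : HasDerivAt (fun h : ℝ => x + a * h) a h := by
        simpa using ((hasDerivAt_id h).const_mul a).const_add x
      have hout := (hdiff (x + a * h)).hasDerivAt
      have := HasDerivAt.comp h hout hin
      simpa [mul_comm] using this.sub_const (u x)
    have hderiv : deriv g = fun h => a * deriv u (x + a * h) := by
      funext h; exact (hDa h).deriv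
    have hbig : (deriv g) =O[nhds (0:ℝ)] fun h : ℝ => h ^ 0 := by
      rw [hderiv]
      have hc : Continuous (fun h : ℝ => a * deriv u (x + a * h)) := by
        have hcd : Continuous (deriv u) := hu.continuous_deriv (by norm_num)
        exact continuous_const.mul (hcd.comp (by continuity))
      have := (hc.tendsto 0).isBigO_one ℝ
      simpa using this
    simpa using bigO_of_deriv_bigO hgdiff hg0 hbig
  | succ n ih =>
    have hu2 : ContDiff ℝ ((n + 1 : ℕ) + 1 : ℕ∞) u := by exact_mod_cast hu
    have hu' : ContDiff ℝ (n + 1) (deriv u) := (contDiff_succ_iff_deriv.mp hu2).2.2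
    have hdiff : Differentiable ℝ u := hu.differentiable (by norm_num)
    obtain ⟨d', hd'⟩ := ih (deriv u) hu'
    refine ⟨fun i => Nat.rec (u x) (fun j _ => d' j / (j + 1)) i, fun a => ?_⟩
    set d : ℕ → ℝ := fun i => Nat.rec (u x) (fun j _ => d' j / (j + 1)) i with hdd
    set g : ℝ → ℝ := fun h => u (x + a * h) - ∑ i ∈ Finset.range (n + 2), a ^ i * d i * h ^ i
      with hg
    have hg0 : g 0 = 0 := by
      simp only [hg, mul_zero, add_zero]
      rw [Finset.sum_eq_single 0]
      · simp [hdd]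
      · intro i _ hi
        rcases Nat.exists_eq_succ_of_ne_zero hi with ⟨j, rfl⟩
        simp
      · intro hmem; simp at hmem
    have hDa : ∀ h : ℝ, HasDerivAt g
        (a * (deriv u (x + a * h) -
          ∑ j ∈ Finset.range (n + 1), a ^ j * d' j * h ^ j)) h := by
      intro h
      have hin : HasDerivAt (fun h : ℝ => x + a * h) a h := by
        simpa using ((hasDerivAt_id h).const_mul a).const_add x
      have hout := (hdiff (x + a * h)).hasDerivAt
      have h1 : HasDerivAt (fun h : ℝ => u (x + a * h)) (a * deriv u (x + a * h)) h := by
        exact (HasDerivAt.comp h hout hin).congr_deriv (mul_comm _ _)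
      have h2 : HasDerivAt (fun h : ℝ => ∑ i ∈ Finset.range (n + 2), a ^ i * d i * h ^ i)
          (∑ i ∈ Finset.range (n + 2), a ^ i * d i * (i * h ^ (i - 1))) h := by
        apply HasDerivAt.fun_sum
        intro i _
        exact (hasDerivAt_pow i h).const_mul _
      have hsum : (∑ i ∈ Finset.range (n + 2), a ^ i * d i * (i * h ^ (i - 1)))
          = a * ∑ j ∈ Finset.range (n + 1), a ^ j * d' j * h ^ j := by
        rw [Finset.sum_range_succ']
        simp only [pow_zero, Nat.cast_zero, zero_mul, mul_zero, add_zero]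
        rw [Finset.mul_sum]
        apply Finset.sum_congr rfl
        intro j _
        have hdj : d (j + 1) = d' j / (j + 1) := rfl
        rw [hdj, Nat.add_sub_cancel]
        push_cast
        have : ((j : ℝ) + 1) ≠ 0 := by positivity
        field_simp
        ring
      have := h1.sub h2
      rw [hsum] at this
      exact this.congr_deriv (by ring)
    have hgdiff : Differentiable ℝ g := fun h => (hDa h).differentiableAt
    have hderiv : deriv g = fun h => a * (deriv u (x + a * h) -
        ∑ j ∈ Finset.range (n + 1), a ^ j * d' j * h ^ j) := by
      funext h; exact (hDa h).deriv
    have hbig : (deriv g) =O[nhds (0:ℝ)] fun h : ℝ => h ^ (n + 1) := by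
      rw [hderiv]
      exact (hd' a).const_mul_left a
    exact bigO_of_deriv_bigO hgdiff hg0 hbig

theorem quick_jump_difference_fourth_order (u : ℝ → ℝ) (hu : ContDiff ℝ 4 u) (x κ : ℝ) :
    (fun h : ℝ => (uR κ x u h - uL κ x u h) - (uRm κ x u h - uLm κ x u h))
      =O[nhdsWithin 0 (Set.Ioi 0)] fun h : ℝ => h ^ 4 := by
  have hu4 : ContDiff ℝ ((3 : ℕ) + 1 : ℕ∞) u := by exact_mod_cast hu
  obtain ⟨d, hd⟩ := taylor_scaled_bigO 3 u hu4 x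
  set E : ℝ → ℝ → ℝ := fun a h => u (x + a * h) - ∑ i ∈ Finset.range 4, a ^ i * d i * h ^ i
    with hE
  have hsum : (fun h : ℝ => E 2 h - 4 * E 1 h + 6 * E 0 h - 4 * E (-1) h + E (-2) h)
      =O[nhds (0:ℝ)] fun h : ℝ => h ^ 4 :=
    ((((hd 2).sub ((hd 1).const_mul_left 4)).add ((hd 0).const_mul_left 6)).sub
      ((hd (-1)).const_mul_left 4)).add (hd (-2))
  have heq : (fun h : ℝ => (uR κ x u h - uL κ x u h) - (uRm κ x u h - uLm κ x u h))
      = fun h : ℝ => (-((1 - κ) / 4)) *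
        (E 2 h - 4 * E 1 h + 6 * E 0 h - 4 * E (-1) h + E (-2) h) := by
    funext h
    simp only [hE, uR, uL, uRm, uLm, Finset.sum_range_succ, Finset.sum_range_zero]
    have e1 : x + 1 * h = x + h := by ring
    have e0 : x + 0 * h = x := by ring
    have em1 : x + (-1) * h = x - h := by ring
    have em2 : x + (-2) * h = x - h - h := by ring
    have e2 : x - h + h = x := by ring
    have e3 : x - h + 2 * h = x + h := by ring
    rw [e1, e0, em1, em2, e2, e3]
    ring
  rw [heq]
  exact (hsum.const_mul_left _).mono nhdsWithin_le_nhds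
end

section
/- Let u : ℝ → ℝ be of class C⁴, fix x ∈ ℝ and κ ∈ ℝ, and let D : ℝ × ℝ → ℝ be Lipschitz continuous. Then the difference of the upwind dissipation terms over the right and left faces satisfies D(uL(u,h), uR(u,h))·(uR(u,h) − uL(u,h)) − D(uL⁻(u,h), uR⁻(u,h))·(uR⁻(u,h) − uL⁻(u,h)) = O(h⁴) as h → 0⁺; hence the dissipation term contributes only an O(h³) truncation error after division by h. -/
open Asymptotics Filter Set MeasureTheory

private lemma step_bigO {g : ℝ → ℝ} (hg : Differentiable ℝ g) (h0 : g 0 = 0) {k : ℕ}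
    (hO : (deriv g) =O[nhdsWithin 0 (Set.Ici (0:ℝ))] fun h => h ^ k) :
    g =O[nhdsWithin 0 (Set.Ici (0:ℝ))] fun h => h ^ (k + 1) := by
  obtain ⟨C, hC⟩ := isBigO_iff.mp hO
  obtain ⟨ε, hε, hsub⟩ := Metric.mem_nhdsWithin_iff.mp hC
  rw [isBigO_iff]
  refine ⟨|C|, ?_⟩
  have hev : Metric.ball (0:ℝ) ε ∩ Set.Ici (0:ℝ) ∈ nhdsWithin 0 (Set.Ici (0:ℝ)) :=
    Filter.inter_mem (mem_nhdsWithin_of_mem_nhds (Metric.ball_mem_nhds 0 hε))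
      self_mem_nhdsWithin
  filter_upwards [hev] with h hh
  obtain ⟨hball, hh0⟩ := hh
  have hh0' : (0:ℝ) ≤ h := hh0
  have hhε : h < ε := by
    have := hball
    rw [Metric.mem_ball, Real.dist_eq, sub_zero] at this
    exact lt_of_le_of_lt (le_abs_self h) this
  have hbd : ∀ t ∈ Set.Ico (0:ℝ) h, ‖deriv g t‖ ≤ |C| * h ^ k := by
    intro t ht
    have ht1 : t ∈ Metric.ball (0:ℝ) ε ∩ Set.Ici (0:ℝ) := by
      refine ⟨?_, ht.1⟩
      rw [Metric.mem_ball, Real.dist_eq, sub_zero, abs_of_nonneg ht.1]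
      exact lt_trans ht.2 hhε
    have h1 := hsub ht1
    calc ‖deriv g t‖ ≤ C * ‖t ^ k‖ := h1
      _ ≤ |C| * h ^ k := by
          rw [Real.norm_eq_abs, abs_pow, abs_of_nonneg ht.1]
          exact mul_le_mul (le_abs_self C) (pow_le_pow_left₀ ht.1 (le_of_lt ht.2) k)
            (pow_nonneg ht.1 k) (abs_nonneg C)
  have key := norm_image_sub_le_of_norm_deriv_le_segment'
    (fun t _ => ((hg t).hasDerivAt.hasDerivWithinAt : HasDerivWithinAt g (deriv g t)
      (Set.Icc 0 h) t)) hbd h (right_mem_Icc.mpr hh0')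
  rw [h0, sub_zero] at key
  calc ‖g h‖ ≤ |C| * h ^ k * (h - 0) := key
    _ = |C| * ‖h ^ (k + 1)‖ := by
        rw [Real.norm_eq_abs, abs_of_nonneg (pow_nonneg hh0' _)]
        ring

private lemma keyN : ∀ (n : ℕ) (g : ℝ → ℝ), ContDiff ℝ n g →
    (∀ k < n, iteratedDeriv k g 0 = 0) →
    g =O[nhdsWithin 0 (Set.Ici (0:ℝ))] fun h => h ^ n := by
  intro n
  induction n with
  | zero =>
      intro g hg _
      simpa using ((hg.continuous.tendsto 0).mono_left nhdsWithin_le_nhds).isBigO_one ℝ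
  | succ n IH =>
      intro g hg h0
      have hg1 : ContDiff ℝ ((n : WithTop ℕ∞) + 1) g := by exact_mod_cast hg
      have hg' : ContDiff ℝ n (deriv g) := (contDiff_succ_iff_deriv.mp hg1).2.2
      have hO := IH (deriv g) hg' (fun k hk => by
        rw [← iteratedDeriv_succ']
        exact h0 (k + 1) (by omega))
      have hdiff : Differentiable ℝ g := (contDiff_succ_iff_deriv.mp hg1).1
      have hg0 : g 0 = 0 := by simpa using h0 0 (Nat.succ_pos n)
      exact step_bigO hdiff hg0 hO

private lemma itd_add {f g : ℝ → ℝ} {k : ℕ} (hf : ContDiff ℝ k f) (hg : ContDiff ℝ k g)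
    (t : ℝ) :
    iteratedDeriv k (fun y => f y + g y) t = iteratedDeriv k f t + iteratedDeriv k g t := by
  simp only [← iteratedDerivWithin_univ]
  exact iteratedDerivWithin_add (Set.mem_univ t) uniqueDiffOn_univ hf.contDiffWithinAt hg.contDiffWithinAt

private lemma itd_cmul (c : ℝ) {f : ℝ → ℝ} {k : ℕ} (hf : ContDiff ℝ k f) (t : ℝ) :
    iteratedDeriv k (fun y => c * f y) t = c * iteratedDeriv k f t := by
  simp only [← iteratedDerivWithin_univ]
  exact iteratedDerivWithin_const_mul (Set.mem_univ t) uniqueDiffOn_univ c hf.contDiffWithinAt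

private lemma itd_shift {u : ℝ → ℝ} (hu : ContDiff ℝ 4 u) (x a : ℝ) (k : ℕ) (hk : k ≤ 4) :
    iteratedDeriv k (fun h : ℝ => u (x + a * h)) 0 = a ^ k * iteratedDeriv k u x := by
  have h1 : ContDiff ℝ k (fun z : ℝ => u (x + z)) :=
    (hu.of_le (by exact_mod_cast hk)).comp (contDiff_const.add contDiff_id)
  calc iteratedDeriv k (fun h : ℝ => u (x + a * h)) 0
      = a ^ k * iteratedDeriv k (fun z : ℝ => u (x + z)) (a * 0) :=
        congrFun (iteratedDeriv_comp_const_mul h1 a) 0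
    _ = a ^ k * iteratedDeriv k u x := by
        rw [iteratedDeriv_comp_const_add]
        norm_num

private lemma combo {u : ℝ → ℝ} (hu : ContDiff ℝ 4 u) (x : ℝ)
    (c₁ c₂ c₃ c₄ c₅ a₁ a₂ a₃ a₄ a₅ : ℝ) (n : ℕ) (hn : n ≤ 4)
    (hm : ∀ k < n, c₁ * a₁ ^ k + c₂ * a₂ ^ k + c₃ * a₃ ^ k + c₄ * a₄ ^ k + c₅ * a₅ ^ k = 0) :
    (fun h : ℝ => c₁ * u (x + a₁ * h) + c₂ * u (x + a₂ * h) + c₃ * u (x + a₃ * h)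
      + c₄ * u (x + a₄ * h) + c₅ * u (x + a₅ * h))
      =O[nhdsWithin 0 (Set.Ici (0:ℝ))] fun h => h ^ n := by
  have hterm : ∀ (m : ℕ), m ≤ 4 → ∀ a : ℝ, ContDiff ℝ m (fun h : ℝ => u (x + a * h)) :=
    fun m hm' a => (hu.of_le (by exact_mod_cast hm')).comp
      (contDiff_const.add (contDiff_const.mul contDiff_id))
  apply keyN n
  · have H : ∀ a : ℝ, ContDiff ℝ n (fun h : ℝ => u (x + a * h)) := hterm n hn
    exact ((((contDiff_const.mul (H a₁)).add (contDiff_const.mul (H a₂))).add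
      (contDiff_const.mul (H a₃))).add (contDiff_const.mul (H a₄))).add
      (contDiff_const.mul (H a₅))
  · intro k hk
    have hk4 : k ≤ 4 := by omega
    have H : ∀ a : ℝ, ContDiff ℝ k (fun h : ℝ => u (x + a * h)) := hterm k hk4
    have hC : ∀ c a : ℝ, ContDiff ℝ k (fun h : ℝ => c * u (x + a * h)) :=
      fun c a => contDiff_const.mul (H a)
    have single : ∀ c a : ℝ, iteratedDeriv k (fun h : ℝ => c * u (x + a * h)) 0
        = c * (a ^ k * iteratedDeriv k u x) := fun c a => by
      rw [itd_cmul c (H a) 0, itd_shift hu x a k hk4]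
    calc iteratedDeriv k (fun h : ℝ => c₁ * u (x + a₁ * h) + c₂ * u (x + a₂ * h)
          + c₃ * u (x + a₃ * h) + c₄ * u (x + a₄ * h) + c₅ * u (x + a₅ * h)) 0
        = iteratedDeriv k (fun h : ℝ => c₁ * u (x + a₁ * h) + c₂ * u (x + a₂ * h)
            + c₃ * u (x + a₃ * h) + c₄ * u (x + a₄ * h)) 0
          + iteratedDeriv k (fun h : ℝ => c₅ * u (x + a₅ * h)) 0 :=
          itd_add ((((hC c₁ a₁).add (hC c₂ a₂)).add (hC c₃ a₃)).add (hC c₄ a₄)) (hC c₅ a₅) 0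
      _ = iteratedDeriv k (fun h : ℝ => c₁ * u (x + a₁ * h) + c₂ * u (x + a₂ * h)
            + c₃ * u (x + a₃ * h)) 0
          + iteratedDeriv k (fun h : ℝ => c₄ * u (x + a₄ * h)) 0
          + iteratedDeriv k (fun h : ℝ => c₅ * u (x + a₅ * h)) 0 := by
          rw [itd_add (((hC c₁ a₁).add (hC c₂ a₂)).add (hC c₃ a₃)) (hC c₄ a₄) 0]
      _ = iteratedDeriv k (fun h : ℝ => c₁ * u (x + a₁ * h) + c₂ * u (x + a₂ * h)) 0
          + iteratedDeriv k (fun h : ℝ => c₃ * u (x + a₃ * h)) 0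
          + iteratedDeriv k (fun h : ℝ => c₄ * u (x + a₄ * h)) 0
          + iteratedDeriv k (fun h : ℝ => c₅ * u (x + a₅ * h)) 0 := by
          rw [itd_add ((hC c₁ a₁).add (hC c₂ a₂)) (hC c₃ a₃) 0]
      _ = iteratedDeriv k (fun h : ℝ => c₁ * u (x + a₁ * h)) 0
          + iteratedDeriv k (fun h : ℝ => c₂ * u (x + a₂ * h)) 0
          + iteratedDeriv k (fun h : ℝ => c₃ * u (x + a₃ * h)) 0
          + iteratedDeriv k (fun h : ℝ => c₄ * u (x + a₄ * h)) 0
          + iteratedDeriv k (fun h : ℝ => c₅ * u (x + a₅ * h)) 0 := by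
          rw [itd_add (hC c₁ a₁) (hC c₂ a₂) 0]
      _ = (c₁ * a₁ ^ k + c₂ * a₂ ^ k + c₃ * a₃ ^ k + c₄ * a₄ ^ k + c₅ * a₅ ^ k)
            * iteratedDeriv k u x := by
          rw [single, single, single, single, single]; ring
      _ = 0 := by rw [hm k hk]; ring

theorem quick_dissipation_difference (u : ℝ → ℝ) (hu : ContDiff ℝ 4 u) (x κ : ℝ)
    (D : ℝ × ℝ → ℝ) (K : NNReal) (hD : LipschitzWith K D) :
    ((fun h : ℝ => D (uL κ x u h, uR κ x u h) * (uR κ x u h - uL κ x u h)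
        - D (uLm κ x u h, uRm κ x u h) * (uRm κ x u h - uLm κ x u h))
      =O[nhdsWithin 0 (Set.Ioi 0)] fun h : ℝ => h ^ 4) ∧
    ((fun h : ℝ => (1 / h) * (D (uL κ x u h, uR κ x u h) * (uR κ x u h - uL κ x u h)
        - D (uLm κ x u h, uRm κ x u h) * (uRm κ x u h - uLm κ x u h)))
      =O[nhdsWithin 0 (Set.Ioi 0)] fun h : ℝ => h ^ 3) := by
  have hmono : nhdsWithin (0:ℝ) (Set.Ioi 0) ≤ nhdsWithin 0 (Set.Ici 0) :=
    nhdsWithin_mono 0 Set.Ioi_subset_Ici_self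
  set c : ℝ := (1 - κ) / 4 with hc
  -- difference of third differences : O(h^4)
  have hPQ : (fun h : ℝ => (uR κ x u h - uL κ x u h) - (uRm κ x u h - uLm κ x u h))
      =O[nhdsWithin 0 (Set.Ici (0:ℝ))] fun h => h ^ 4 := by
    have := combo hu x (-c) (4*c) (-(6*c)) (4*c) (-c) 2 1 0 (-1) (-2) 4 le_rfl
      (by intro k hk; interval_cases k <;> simp [hc] <;> ring)
    refine this.congr (fun h => ?_) (fun _ => rfl)
    simp only [uL, uR, uLm, uRm]
    simp only [show x + 1*h = x + h from by ring, show x + 0*h = x from by ring,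
      show x + (-1)*h = x - h from by ring, show x + (-2)*h = x - 2*h from by ring,
      show x - h + h = x from by ring, show x - h + 2*h = x + h from by ring,
      show x - h - h = x - 2*h from by ring]
    ring
  -- third difference over left face : O(h^3)
  have hQ : (fun h : ℝ => uRm κ x u h - uLm κ x u h)
      =O[nhdsWithin 0 (Set.Ici (0:ℝ))] fun h => h ^ 3 := by
    have := combo hu x 0 (-c) (3*c) (-(3*c)) c 2 1 0 (-1) (-2) 3 (by norm_num)
      (by intro k hk; interval_cases k <;> simp [hc] <;> ring)
    refine this.congr (fun h => ?_) (fun _ => rfl)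
    simp only [uL, uR, uLm, uRm]
    simp only [show x + 1*h = x + h from by ring, show x + 0*h = x from by ring,
      show x + (-1)*h = x - h from by ring, show x + (-2)*h = x - 2*h from by ring,
      show x - h + h = x from by ring, show x - h + 2*h = x + h from by ring,
      show x - h - h = x - 2*h from by ring]
    ring
  -- uL - uLm : O(h)
  have hdL : (fun h : ℝ => uL κ x u h - uLm κ x u h)
      =O[nhdsWithin 0 (Set.Ici (0:ℝ))] fun h => h ^ 1 := by
    have := combo hu x 0 (1/2 - c) (3*c) (-(1/2) - 3*c) c 2 1 0 (-1) (-2) 1 (by norm_num)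
      (by intro k hk; interval_cases k <;> simp [hc] <;> ring)
    refine this.congr (fun h => ?_) (fun _ => rfl)
    simp only [uL, uR, uLm, uRm]
    simp only [show x + 1*h = x + h from by ring, show x + 0*h = x from by ring,
      show x + (-1)*h = x - h from by ring, show x + (-2)*h = x - 2*h from by ring,
      show x - h + h = x from by ring, show x - h + 2*h = x + h from by ring,
      show x - h - h = x - 2*h from by ring]
    ring
  -- uR - uRm : O(h)
  have hdR : (fun h : ℝ => uR κ x u h - uRm κ x u h)
      =O[nhdsWithin 0 (Set.Ici (0:ℝ))] fun h => h ^ 1 := by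
    have := combo hu x (-c) (1/2 + 3*c) (-(3*c)) (-(1/2) + c) 0 2 1 0 (-1) (-2) 1 (by norm_num)
      (by intro k hk; interval_cases k <;> simp [hc] <;> ring)
    refine this.congr (fun h => ?_) (fun _ => rfl)
    simp only [uL, uR, uLm, uRm]
    simp only [show x + 1*h = x + h from by ring, show x + 0*h = x from by ring,
      show x + (-1)*h = x - h from by ring, show x + (-2)*h = x - 2*h from by ring,
      show x - h + h = x from by ring, show x - h + 2*h = x + h from by ring,
      show x - h - h = x - 2*h from by ring]
    ring
  -- boundedness of D at the faces
  have hucont : Continuous u := hu.continuous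
  have hcontL : Continuous fun h : ℝ => uL κ x u h := by unfold uL; fun_prop
  have hcontR : Continuous fun h : ℝ => uR κ x u h := by unfold uR; fun_prop
  have hA : (fun h : ℝ => D (uL κ x u h, uR κ x u h))
      =O[nhdsWithin 0 (Set.Ici (0:ℝ))] (fun _ => (1:ℝ)) := by
    have hcA : Continuous fun h : ℝ => D (uL κ x u h, uR κ x u h) :=
      hD.continuous.comp (hcontL.prodMk hcontR)
    exact ((hcA.tendsto 0).mono_left nhdsWithin_le_nhds).isBigO_one ℝ
  -- Lipschitz difference of D-values : O(h)
  have hsum : (fun h : ℝ => ‖uL κ x u h - uLm κ x u h‖ + ‖uR κ x u h - uRm κ x u h‖)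
      =O[nhdsWithin 0 (Set.Ici (0:ℝ))] fun h => h ^ 1 := hdL.norm_left.add hdR.norm_left
  have hAB : (fun h : ℝ => D (uL κ x u h, uR κ x u h) - D (uLm κ x u h, uRm κ x u h))
      =O[nhdsWithin 0 (Set.Ici (0:ℝ))] fun h => h ^ 1 := by
    refine IsBigO.trans ?_ hsum
    rw [isBigO_iff]
    refine ⟨K, Filter.Eventually.of_forall fun h => ?_⟩
    have h1 := hD.dist_le_mul (uL κ x u h, uR κ x u h) (uLm κ x u h, uRm κ x u h)
    rw [Real.dist_eq] at h1
    refine le_trans h1 (mul_le_mul_of_nonneg_left ?_ K.coe_nonneg)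
    simp only [Prod.dist_eq, Real.dist_eq, Real.norm_eq_abs]
    have h2 : (0:ℝ) ≤ |uL κ x u h - uLm κ x u h| + |uR κ x u h - uRm κ x u h| := by positivity
    rw [abs_of_nonneg h2]
    exact max_le (le_add_of_nonneg_right (abs_nonneg _)) (le_add_of_nonneg_left (abs_nonneg _))
  -- assemble part 1 on the Ici filter
  have part1' : (fun h : ℝ => D (uL κ x u h, uR κ x u h) * (uR κ x u h - uL κ x u h)
      - D (uLm κ x u h, uRm κ x u h) * (uRm κ x u h - uLm κ x u h))
      =O[nhdsWithin 0 (Set.Ici (0:ℝ))] fun h : ℝ => h ^ 4 := by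
    have t1 := (hA.mul hPQ).congr (fun _ => rfl) (fun h : ℝ => by
      show (1:ℝ) * h ^ 4 = h ^ 4; ring)
    have t2 := (hAB.mul hQ).congr (fun _ => rfl) (fun h : ℝ => by
      show h ^ 1 * h ^ 3 = h ^ 4; ring)
    exact (t1.add t2).congr (fun h => by ring) (fun _ => rfl)
  have part1 := part1'.mono hmono
  refine ⟨part1, ?_⟩
  have part2 := part1.mul (isBigO_refl (fun h : ℝ => 1 / h) (nhdsWithin 0 (Set.Ioi (0:ℝ))))
  refine part2.congr' (Filter.Eventually.of_forall fun h => by ring) ?_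
  filter_upwards [self_mem_nhdsWithin] with h (hh : (0:ℝ) < h)
  have hne : h ≠ 0 := ne_of_gt hh
  field_simp
end

section
/- Let u : ℝ → ℝ be of class C⁵, fix x ∈ ℝ, κ ∈ ℝ, α ∈ ℝ, and ν > 0. Define the face-gradient approximation G(h) = ν·(u(x+h) − u(x))/h + (ν·α/(2h))·(uR(u,h) − uL(u,h)). Then G(h) = ν·u'(x) + (ν/2)·u''(x)·h + (ν/8)·(4/3 + α·(κ−1))·u'''(x)·h² + (ν/48)·(2 + 3·α·(κ−1))·u''''(x)·h³ + O(h⁴) as h → 0⁺. -/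
open Asymptotics Filter Set MeasureTheory

open Finset Nat in
lemma taylor_err (n : ℕ) : ∀ (f : ℝ → ℝ), ContDiff ℝ n f → ∀ x : ℝ,
    (fun h : ℝ => f (x + h) - ∑ i ∈ Finset.range (n + 1), iteratedDeriv i f x / i ! * h ^ i)
      =o[nhds 0] fun h : ℝ => h ^ n := by
  induction n with
  | zero =>
    intro f hf x
    simp only [Finset.range_one, Finset.sum_singleton, iteratedDeriv_zero, Nat.factorial_zero,
      Nat.cast_one, div_one, pow_zero, mul_one]
    rw [isLittleO_one_iff]
    have : Filter.Tendsto (fun h : ℝ => f (x + h)) (nhds 0) (nhds (f x)) := by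
      have := (hf.continuous.tendsto x).comp (by
        simpa using (continuous_const.add continuous_id).tendsto (0 : ℝ))
      exact this
    have h2 := this.sub (tendsto_const_nhds (x := f x))
    simpa using h2
  | succ n ih =>
    intro f hf x
    have hf2 : ContDiff ℝ ((n : ℕ∞) + 1) f := by exact_mod_cast hf
    obtain ⟨hfd, hf'⟩ := contDiff_succ_iff_deriv.mp hf2
    replace hf' := hf'.2
    set E : ℝ → ℝ := fun h =>
      f (x + h) - ∑ i ∈ Finset.range (n + 2), iteratedDeriv i f x / i ! * h ^ i with hE
    set D : ℝ → ℝ := fun h =>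
      deriv f (x + h) - ∑ i ∈ Finset.range (n + 1), iteratedDeriv i (deriv f) x / i ! * h ^ i
      with hDdef
    have hD : D =o[nhds 0] fun h : ℝ => h ^ n := ih (deriv f) hf' x
    have hED : ∀ h : ℝ, HasDerivAt E (D h) h := by
      intro h
      have h1 : HasDerivAt (fun h : ℝ => f (x + h)) (deriv f (x + h)) h := by
        have := ((hfd (x + h)).hasDerivAt).comp h ((hasDerivAt_id h).const_add x)
        rw [mul_one] at this
        exact this
      have h2 : HasDerivAt (fun h : ℝ => ∑ i ∈ Finset.range (n + 2),
          iteratedDeriv i f x / i ! * h ^ i)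
          (∑ j ∈ Finset.range (n + 1), iteratedDeriv j (deriv f) x / j ! * h ^ j) h := by
        have h3 : HasDerivAt (fun h : ℝ => ∑ i ∈ Finset.range (n + 2),
            iteratedDeriv i f x / i ! * h ^ i)
            (∑ j ∈ Finset.range (n + 2), iteratedDeriv j f x / j ! * (j * h ^ (j - 1))) h :=
          HasDerivAt.fun_sum fun j _ => (hasDerivAt_pow j h).const_mul _
        convert h3 using 1
        rw [Finset.sum_range_succ' (fun j => iteratedDeriv j f x / j ! * (j * h ^ (j - 1)))]
        simp only [Nat.cast_zero, zero_mul, mul_zero, add_zero]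
        refine Finset.sum_congr rfl fun j _ => ?_
        rw [← iteratedDeriv_succ']
        have : ((j + 1)! : ℝ) = (j + 1) * j ! := by
          rw [Nat.factorial_succ]; push_cast; ring
        rw [this]
        simp only [Nat.add_sub_cancel, Nat.cast_add, Nat.cast_one]
        have hj : ((j : ℝ) + 1) ≠ 0 := by positivity
        have hjf : (j ! : ℝ) ≠ 0 := by positivity
        field_simp
      exact h1.sub h2
    have hE0 : E 0 = 0 := by
      simp only [hE, Finset.sum_range_succ' (fun i => iteratedDeriv i f x / i ! * (0:ℝ) ^ i)]
      simp [iteratedDeriv_zero]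
    rw [Asymptotics.isLittleO_iff]
    intro ε hε
    have := Asymptotics.isLittleO_iff.mp hD hε
    rw [Metric.eventually_nhds_iff] at this
    obtain ⟨δ, hδ, hbound⟩ := this
    rw [Metric.eventually_nhds_iff]
    refine ⟨δ, hδ, fun h hh => ?_⟩
    have habs : |h| < δ := by simpa [Real.dist_eq] using hh
    have key := Convex.norm_image_sub_le_of_norm_hasDerivWithin_le
      (f := E) (f' := D) (C := ε * |h| ^ n) (s := Set.uIcc 0 h)
      (fun t ht => (hED t).hasDerivWithinAt)
      (fun t ht => ?_) (convex_uIcc 0 h) (Set.left_mem_uIcc) (Set.right_mem_uIcc)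
    · calc ‖E h‖ = ‖E h - E 0‖ := by rw [hE0, sub_zero]
        _ ≤ ε * |h| ^ n * ‖h - 0‖ := key
        _ = ε * ‖h ^ (n + 1)‖ := by
            rw [sub_zero]
            simp [Real.norm_eq_abs, abs_pow, pow_succ, mul_assoc]
    · have ht' : |t| ≤ |h| := by
        rcases Set.mem_uIcc.mp ht with ⟨h1, h2⟩ | ⟨h1, h2⟩
        · rw [abs_of_nonneg h1]; exact h2.trans (le_abs_self h)
        · rw [abs_of_nonpos h2]
          calc -t ≤ -h := neg_le_neg h1
            _ ≤ |h| := neg_le_abs h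
      have := hbound (y := t) (by simpa [Real.dist_eq] using ht'.trans_lt habs)
      calc ‖D t‖ ≤ ε * ‖t ^ n‖ := this
        _ ≤ ε * |h| ^ n := by
            rw [Real.norm_eq_abs, abs_pow]
            exact mul_le_mul_of_nonneg_left (pow_le_pow_left₀ (abs_nonneg t) ht' n) hε.le

theorem quick_face_gradient_expansion (u : ℝ → ℝ) (hu : ContDiff ℝ 5 u)
    (x κ α ν : ℝ) (hν : 0 < ν) :
    (fun h : ℝ =>
        (ν * (u (x + h) - u x) / h + (ν * α / (2 * h)) * (uR κ x u h - uL κ x u h))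
        - (ν * deriv u x + (ν / 2) * iteratedDeriv 2 u x * h
           + (ν / 8) * (4 / 3 + α * (κ - 1)) * iteratedDeriv 3 u x * h ^ 2
           + (ν / 48) * (2 + 3 * α * (κ - 1)) * iteratedDeriv 4 u x * h ^ 3))
      =O[nhdsWithin 0 (Set.Ioi 0)] fun h : ℝ => h ^ 4 := by
  have hu5 : ContDiff ℝ (5 : ℕ) u := by exact_mod_cast hu
  have base := taylor_err 5 u hu5 x
  set l := nhdsWithin (0 : ℝ) (Set.Ioi 0) with hl
  set E : ℝ → ℝ → ℝ := fun t h =>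
    u (x + t * h) - ∑ i ∈ Finset.range 6, iteratedDeriv i u x / (i.factorial : ℝ) * (t * h) ^ i with hEdef
  have hE : ∀ t : ℝ, (fun h : ℝ => E t h) =O[l] fun h : ℝ => h ^ 5 := by
    intro t
    have ht : Filter.Tendsto (fun h : ℝ => t * h) l (nhds 0) := by
      have h1 : Filter.Tendsto (fun h : ℝ => t * h) (nhds 0) (nhds 0) := by
        simpa using (tendsto_const_nhds (x := t)).mul (tendsto_id (x := nhds (0:ℝ)))
      exact h1.mono_left nhdsWithin_le_nhds
    have h2 := (base.isBigO.comp_tendsto ht)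
    simp only [Function.comp_def] at h2
    refine IsBigO.trans (show (fun h : ℝ => E t h) =O[l] fun h : ℝ => (t * h) ^ 5 from h2) ?_
    have h3 : (fun h : ℝ => (t * h) ^ 5) = fun h : ℝ => t ^ 5 * h ^ 5 := by
      funext h; ring
    rw [h3]
    exact (isBigO_refl (fun h : ℝ => h ^ 5) l).const_mul_left _
  have hdiv : ∀ f : ℝ → ℝ, (f =O[l] fun h : ℝ => h ^ 5) →
      (fun h : ℝ => f h / h) =O[l] fun h : ℝ => h ^ 4 := by
    intro f hf
    have h1 := hf.mul (isBigO_refl (fun h : ℝ => h⁻¹) l)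
    refine h1.congr' (by filter_upwards with h; rw [div_eq_mul_inv]) ?_
    filter_upwards [self_mem_nhdsWithin] with h hh
    have h0 : h ≠ 0 := ne_of_gt hh
    field_simp
  have hO : (fun h : ℝ => ν * (E 1 h / h)
      + (ν * α * (κ - 1) / 8) * ((E 2 h - 3 * E 1 h - E (-1) h) / h)
      + (ν / 120 + ν * α * (κ - 1) / 32) * iteratedDeriv 5 u x * h ^ 4)
      =O[l] fun h : ℝ => h ^ 4 := by
    have t1 := ((hdiv _ (hE 1)).const_mul_left ν)
    have t2 := ((hdiv _ (((hE 2).sub ((hE 1).const_mul_left 3)).sub (hE (-1)))).const_mul_left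
      (ν * α * (κ - 1) / 8))
    have t3 : (fun h : ℝ => (ν / 120 + ν * α * (κ - 1) / 32) * iteratedDeriv 5 u x * h ^ 4)
        =O[l] fun h : ℝ => h ^ 4 :=
      (isBigO_refl (fun h : ℝ => h ^ 4) l).const_mul_left _
    exact (t1.add t2).add t3
  refine hO.congr' ?_ (EventuallyEq.refl _ _)
  filter_upwards [self_mem_nhdsWithin] with h hh
  have h0 : h ≠ 0 := ne_of_gt hh
  have hm : x + (-1) * h = x - h := by ring
  have h1 : x + 1 * h = x + h := by ring
  simp only [hEdef, hm, h1, uL, uR]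
  simp only [Finset.sum_range_succ, Finset.sum_range_zero, iteratedDeriv_zero, iteratedDeriv_one]
  norm_num [Nat.factorial]
  field_simp
  ring
end

section
/- Let u : ℝ → ℝ be of class C⁵, fix x ∈ ℝ, κ ∈ ℝ with κ ≠ 1, and ν > 0, and set α = 1/(3·(1−κ)). Define the face-gradient approximation G(h) = ν·(u(x+h) − u(x))/h + (ν·α/(2h))·(uR(u,h) − uL(u,h)). Then G(h) is fourth-order accurate at the face: G(h) − ν·u'(x + h/2) = O(h⁴) as h → 0⁺. In particular, for the QUICK value κ = 1/2 the compatible damping coefficient is α = 2/3. -/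
open Asymptotics Filter Set MeasureTheory

lemma taylor_remainder_isBigO (n : ℕ) :
    ∀ (f : ℝ → ℝ), ContDiff ℝ (n + 1 : ℕ) f → ∀ c : ℝ,
    (fun h : ℝ => f (c + h) - ∑ k ∈ Finset.range (n + 1),
        iteratedDeriv k f c * h ^ k / (Nat.factorial k)) =O[nhds 0] fun h : ℝ => h ^ (n + 1) := by
  induction n with
  | zero =>
    intro f hf c
    have hd : HasDerivAt f (deriv f c) c := (hf.differentiable (by norm_num) c).hasDerivAt
    have t : Filter.Tendsto (fun h : ℝ => c + h) (nhds 0) (nhds c) := by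
      simpa using (continuous_add_left c).tendsto (0 : ℝ)
    have h1 := hd.hasFDerivAt.isBigO_sub.comp_tendsto t
    simpa [Function.comp_def, Nat.factorial] using h1
  | succ n ih =>
    intro f hf c
    have hfd : Differentiable ℝ f := hf.differentiable
      (by simp)
    have hg : ContDiff ℝ (n + 1 : ℕ) (deriv f) := by
      have h2 : ContDiff ℝ (((n + 1 : ℕ) : WithTop ℕ∞) + 1) f := by exact_mod_cast hf
      exact (contDiff_succ_iff_deriv.mp h2).2.2
    have ihg := ih (deriv f) hg c
    set R : ℝ → ℝ := fun h => f (c + h) - ∑ k ∈ Finset.range (n + 1 + 1),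
        iteratedDeriv k f c * h ^ k / (Nat.factorial k) with hR
    set R' : ℝ → ℝ := fun h => deriv f (c + h) - ∑ k ∈ Finset.range (n + 1),
        iteratedDeriv k (deriv f) c * h ^ k / (Nat.factorial k) with hR'
    have hR0 : R 0 = 0 := by
      rw [hR]
      simp only [add_zero]
      rw [Finset.sum_eq_single 0]
      · simp
      · intro k _ hk
        simp [zero_pow hk]
      · simp
    have hRd : ∀ t : ℝ, HasDerivAt R (R' t) t := by
      intro t
      have h1 : HasDerivAt (fun h : ℝ => f (c + h)) (deriv f (c + t) * 1) t :=
        (hfd (c + t)).hasDerivAt.comp t ((hasDerivAt_id t).const_add c)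
      have h2 : ∀ k ∈ Finset.range (n + 1 + 1), HasDerivAt
          (fun h : ℝ => iteratedDeriv k f c * h ^ k / (Nat.factorial k))
          (iteratedDeriv k f c / (Nat.factorial k) * (k * t ^ (k - 1))) t := by
        intro k _
        have h0 := (hasDerivAt_pow k t).const_mul (iteratedDeriv k f c / (Nat.factorial k))
        have heq : (fun h : ℝ => iteratedDeriv k f c / (Nat.factorial k) * h ^ k)
            = fun h : ℝ => iteratedDeriv k f c * h ^ k / (Nat.factorial k) := by
          funext y; ring
        rwa [heq] at h0
      have h4 := h1.fun_sub (HasDerivAt.fun_sum h2)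
      convert h4 using 1
      · rfl
      · rfl
      simp only [hR', mul_one]
      congr 1
      conv_rhs => rw [Finset.sum_range_succ']
      simp only [Nat.cast_zero, zero_mul, mul_zero, add_zero, Nat.add_sub_cancel]
      refine Finset.sum_congr rfl fun k _ => ?_
      rw [← iteratedDeriv_succ', Nat.factorial_succ]
      have hk : (Nat.factorial k : ℝ) ≠ 0 := by positivity
      push_cast
      field_simp
    obtain ⟨C, hC⟩ := ihg.bound
    rw [Metric.eventually_nhds_iff] at hC
    obtain ⟨ε, hε, hCb⟩ := hC
    rw [isBigO_iff]
    refine ⟨|C|, Metric.eventually_nhds_iff.mpr ⟨ε, hε, ?_⟩⟩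
    intro h hh
    simp only [Real.dist_eq, sub_zero] at hh
    have key : ∀ t ∈ Set.Icc (min 0 h) (max 0 h), ‖R' t‖ ≤ |C| * |h| ^ (n + 1) := by
      intro t ht
      have habs : |t| ≤ |h| := by
        rw [abs_le]
        constructor
        · exact le_trans (le_min (neg_nonpos.mpr (abs_nonneg h)) (neg_abs_le h)) ht.1
        · exact le_trans ht.2 (max_le (abs_nonneg h) (le_abs_self h))
      have hb := hCb (show dist t 0 < ε by
        rw [Real.dist_eq, sub_zero]; exact lt_of_le_of_lt habs hh)
      refine hb.trans ?_
      rw [norm_pow, Real.norm_eq_abs]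
      exact mul_le_mul (le_abs_self C) (pow_le_pow_left₀ (abs_nonneg t) habs (n + 1))
        (by positivity) (abs_nonneg C)
    show ‖R h‖ ≤ |C| * ‖h ^ (n + 1 + 1)‖
    have hnorm : ‖h ^ (n + 1 + 1)‖ = |h| ^ (n + 1) * |h| := by
      rw [norm_pow, Real.norm_eq_abs, pow_succ]
    rw [hnorm, ← mul_assoc]
    rcases le_total 0 h with h0 | h0
    · have hmm : min 0 h = 0 := min_eq_left h0
      have hmx : max 0 h = h := max_eq_right h0
      have hbound : ∀ t ∈ Set.Ico 0 h, ‖R' t‖ ≤ |C| * |h| ^ (n + 1) := fun t ht => by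
        refine key t ?_; rw [hmm, hmx]; exact Set.Ico_subset_Icc_self ht
      have := norm_image_sub_le_of_norm_deriv_le_segment'
        (f' := R') (fun t _ => (hRd t).hasDerivWithinAt) hbound h
        (Set.right_mem_Icc.mpr h0)
      rw [hR0, sub_zero] at this
      calc ‖R h‖ ≤ |C| * |h| ^ (n + 1) * (h - 0) := this
        _ = |C| * |h| ^ (n + 1) * |h| := by rw [sub_zero, abs_of_nonneg h0]
    · have hmm : min 0 h = h := min_eq_right h0
      have hmx : max 0 h = 0 := max_eq_left h0
      have hbound : ∀ t ∈ Set.Ico h 0, ‖R' t‖ ≤ |C| * |h| ^ (n + 1) := fun t ht => by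
        refine key t ?_; rw [hmm, hmx]; exact Set.Ico_subset_Icc_self ht
      have := norm_image_sub_le_of_norm_deriv_le_segment'
        (f' := R') (fun t _ => (hRd t).hasDerivWithinAt) hbound 0
        (Set.right_mem_Icc.mpr h0)
      rw [hR0, zero_sub, norm_neg] at this
      calc ‖R h‖ ≤ |C| * |h| ^ (n + 1) * (0 - h) := this
        _ = |C| * |h| ^ (n + 1) * |h| := by rw [zero_sub, abs_of_nonpos h0]
lemma taylor_scaled (n : ℕ) (f : ℝ → ℝ) (hf : ContDiff ℝ (n + 1 : ℕ) f) (c a : ℝ)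
    (tay : (fun h : ℝ => f (c + h) - ∑ k ∈ Finset.range (n + 1),
        iteratedDeriv k f c * h ^ k / (Nat.factorial k)) =O[nhds 0] fun h : ℝ => h ^ (n + 1)) :
    (fun h : ℝ => f (c + a * h) - ∑ k ∈ Finset.range (n + 1),
        iteratedDeriv k f c * (a * h) ^ k / (Nat.factorial k)) =O[nhds 0]
      fun h : ℝ => h ^ (n + 1) := by
  have t : Filter.Tendsto (fun h : ℝ => a * h) (nhds 0) (nhds 0) := by
    simpa using (continuous_mul_left a).tendsto (0 : ℝ)
  have h1 : (fun h : ℝ => f (c + a * h) - ∑ k ∈ Finset.range (n + 1),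
      iteratedDeriv k f c * (a * h) ^ k / (Nat.factorial k)) =O[nhds 0]
      fun h : ℝ => (a * h) ^ (n + 1) := tay.comp_tendsto t
  refine h1.trans ?_
  have h2 := (isBigO_refl (fun h : ℝ => h ^ (n + 1)) (nhds 0)).const_mul_left (a ^ (n + 1))
  exact h2.congr_left fun h => by ring


theorem quick_face_gradient_fourth_order (u : ℝ → ℝ) (hu : ContDiff ℝ 5 u)
    (x κ ν α : ℝ) (hκ : κ ≠ 1) (hν : 0 < ν) (hα : α = 1 / (3 * (1 - κ))) :
    ((fun h : ℝ =>
        (ν * (u (x + h) - u x) / h + (ν * α / (2 * h)) * (uR κ x u h - uL κ x u h))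
        - ν * deriv u (x + h / 2))
      =O[nhdsWithin 0 (Set.Ioi 0)] fun h : ℝ => h ^ 4) ∧
    (κ = 1 / 2 → α = 2 / 3) := by
  refine ⟨?_, fun hk => by rw [hα, hk]; norm_num⟩
  have hu5 : ContDiff ℝ ((4 : ℕ) + 1 : ℕ) u := by exact_mod_cast hu
  have hg4 : ContDiff ℝ ((3 : ℕ) + 1 : ℕ) (deriv u) := by
    have h2 : ContDiff ℝ (((4 : ℕ) : WithTop ℕ∞) + 1) u := by exact_mod_cast hu
    exact_mod_cast (contDiff_succ_iff_deriv.mp h2).2.2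
  have hE1 := taylor_scaled 4 u hu5 x 1 (taylor_remainder_isBigO 4 u hu5 x)
  have hE2 := taylor_scaled 4 u hu5 x 2 (taylor_remainder_isBigO 4 u hu5 x)
  have hEm := taylor_scaled 4 u hu5 x (-1) (taylor_remainder_isBigO 4 u hu5 x)
  have hEG := taylor_scaled 3 (deriv u) hg4 x (1/2) (taylor_remainder_isBigO 3 (deriv u) hg4 x)
  have combo := ((hE1.sub (((hE2.sub (hE1.const_mul_left 3)).sub hEm).const_mul_left
    (1/24))).const_mul_left ν).mono (nhdsWithin_le_nhds (s := Set.Ioi (0:ℝ)))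
  have hmul := combo.mul (isBigO_refl (fun h : ℝ => h⁻¹) (nhdsWithin 0 (Set.Ioi 0)))
  have hpow : (fun h : ℝ => h ^ (4 + 1) * h⁻¹) =O[nhdsWithin 0 (Set.Ioi 0)]
      fun h : ℝ => h ^ 4 := by
    refine (isBigO_refl (fun h : ℝ => h ^ 4) _).congr' ?_ EventuallyEq.rfl
    filter_upwards [self_mem_nhdsWithin] with h hh
    have hne : h ≠ 0 := ne_of_gt hh
    conv_rhs => rw [pow_succ, mul_assoc, mul_inv_cancel₀ hne, mul_one]
  have part1 := hmul.trans hpow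
  have part2 := (hEG.const_mul_left ν).mono (nhdsWithin_le_nhds (s := Set.Ioi (0:ℝ)))
  have total := part1.sub part2
  refine total.congr' ?_ EventuallyEq.rfl
  filter_upwards [self_mem_nhdsWithin] with h hh
  have hne : h ≠ 0 := ne_of_gt (show (0:ℝ) < h from hh)
  have h1κ : (1 : ℝ) - κ ≠ 0 := sub_ne_zero_of_ne (Ne.symm hκ)
  have hD1 : iteratedDeriv 0 (deriv u) x = iteratedDeriv 1 u x :=
    congrFun (iteratedDeriv_succ' (n := 0) (f := u)).symm x
  have hD2 : iteratedDeriv 1 (deriv u) x = iteratedDeriv 2 u x :=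
    congrFun (iteratedDeriv_succ' (n := 1) (f := u)).symm x
  have hD3 : iteratedDeriv 2 (deriv u) x = iteratedDeriv 3 u x :=
    congrFun (iteratedDeriv_succ' (n := 2) (f := u)).symm x
  have hD4 : iteratedDeriv 3 (deriv u) x = iteratedDeriv 4 u x :=
    congrFun (iteratedDeriv_succ' (n := 3) (f := u)).symm x
  simp only [uL, uR, Finset.sum_range_succ, Finset.sum_range_zero, hD1, hD2, hD3, hD4]
  rw [hα]
  have harg1 : x + (-1) * h = x - h := by ring
  have harg2 : x + (1/2 : ℝ) * h = x + h / 2 := by ring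
  have harg3 : x + 1 * h = x + h := by ring
  rw [harg1, harg2, harg3]
  norm_num [Nat.factorial]
  field_simp
  ring
end

section
/- Let u : ℝ → ℝ be of class C⁶, fix x ∈ ℝ, and let ν ∈ ℝ. Then the five-point diffusion scheme satisfies −ν·(−u(x−2h) + 28·u(x−h) − 54·u(x) + 28·u(x+h) − u(x+2h))/(24·h²) = −ν·u''(x) − (ν/24)·u''''(x)·h² + O(h⁴) as h → 0⁺. -/
open Asymptotics Filter Set MeasureTheory
open scoped Nat

private lemma eqOn_iDW {f : ℝ → ℝ} {s : Set ℝ} (hs : UniqueDiffOn ℝ s) (n : ℕ)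
    (hf : ∀ k, k < n → Differentiable ℝ (iteratedDeriv k f)) :
    Set.EqOn (iteratedDerivWithin n f s) (iteratedDeriv n f) s := by
  induction n with
  | zero => intro y _; simp
  | succ n ih =>
    intro y hy
    have ih' := ih (fun k hk => hf k (hk.trans (Nat.lt_succ_self n)))
    rw [iteratedDerivWithin_succ, iteratedDeriv_succ,
      derivWithin_congr ih' (ih' hy),
      ((hf n (Nat.lt_succ_self n)) y).derivWithin (hs y hy)]

private lemma base_taylor {u : ℝ → ℝ} (hu : ContDiff ℝ 6 u) (x : ℝ) :
    ∃ C : ℝ, ∀ t ∈ Set.Icc (0:ℝ) 1,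
      |u (x + t) - ∑ k ∈ Finset.range 6, iteratedDeriv k u x * t ^ k / (k ! : ℝ)| ≤ C * t ^ 6 := by
  obtain ⟨C, hC⟩ := exists_taylor_mean_remainder_bound (n := 5) (f := u)
    (by linarith : x ≤ x + 1) (hu.contDiffOn.of_le (by norm_num))
  refine ⟨C, fun t ht => ?_⟩
  have hy : x + t ∈ Set.Icc x (x + 1) := ⟨by linarith [ht.1], by linarith [ht.2]⟩
  have := hC (x + t) hy
  rw [taylor_within_apply] at this
  have hEq : ∀ k ∈ Finset.range 6,
      ((k ! : ℝ)⁻¹ * (x + t - x) ^ k) • iteratedDerivWithin k u (Set.Icc x (x + 1)) x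
        = iteratedDeriv k u x * t ^ k / (k ! : ℝ) := by
    intro k hk
    have hdw := eqOn_iDW (uniqueDiffOn_Icc (by linarith : x < x + 1)) k
      (fun j hj => hu.differentiable_iteratedDeriv j
        (by exact_mod_cast lt_of_lt_of_le (Nat.lt_of_lt_of_le hj (by
          simpa using Finset.mem_range.mp hk |>.le)) le_rfl))
      (Set.left_mem_Icc.mpr (by linarith))
    rw [hdw, smul_eq_mul]
    ring_nf
  rw [Finset.sum_congr rfl hEq] at this
  simpa [Real.norm_eq_abs, add_sub_cancel_left] using this

private lemma both_taylor {u : ℝ → ℝ} (hu : ContDiff ℝ 6 u) (x : ℝ) :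
    ∃ C : ℝ, ∀ t : ℝ, |t| ≤ 1 →
      |u (x + t) - ∑ k ∈ Finset.range 6, iteratedDeriv k u x * t ^ k / (k ! : ℝ)| ≤ C * |t| ^ 6 := by
  obtain ⟨C₁, h₁⟩ := base_taylor hu x
  have hneg : ContDiff ℝ 6 (fun s : ℝ => u (-s)) := hu.comp (contDiff_id.neg)
  obtain ⟨C₂, h₂⟩ := base_taylor hneg (-x)
  refine ⟨max C₁ C₂, fun t ht => ?_⟩
  rcases le_or_gt 0 t with htp | htn
  · have hb := h₁ t ⟨htp, by rwa [abs_of_nonneg htp] at ht⟩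
    rw [abs_of_nonneg htp]
    refine hb.trans ?_
    gcongr
    exact le_max_left _ _
  · have hs : -t ∈ Set.Icc (0:ℝ) 1 := ⟨by linarith, by rwa [abs_of_neg htn] at ht⟩
    have hb := h₂ (-t) hs
    have harg : -x + -t = -(x + t) := by ring
    rw [harg, neg_neg] at hb
    have hsum : ∑ k ∈ Finset.range 6,
          iteratedDeriv k (fun s : ℝ => u (-s)) (-x) * (-t) ^ k / (k ! : ℝ)
        = ∑ k ∈ Finset.range 6, iteratedDeriv k u x * t ^ k / (k ! : ℝ) := by
      refine Finset.sum_congr rfl fun k _ => ?_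
      rw [iteratedDeriv_comp_neg, neg_neg, smul_eq_mul]
      congr 1
      calc (-1:ℝ) ^ k * iteratedDeriv k u x * (-t) ^ k
          = iteratedDeriv k u x * ((-1:ℝ) * -t) ^ k := by rw [mul_pow]; ring
        _ = iteratedDeriv k u x * t ^ k := by rw [neg_one_mul, neg_neg]
    rw [hsum] at hb
    rw [abs_of_neg htn]
    refine hb.trans ?_
    gcongr
    exact le_max_right _ _

private lemma shiftO {u : ℝ → ℝ} (hu : ContDiff ℝ 6 u) (x c : ℝ) :
    (fun h : ℝ => u (x + c * h) - ∑ k ∈ Finset.range 6, iteratedDeriv k u x * (c * h) ^ k / (k ! : ℝ))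
      =O[nhdsWithin 0 (Set.Ioi 0)] fun h : ℝ => h ^ 6 := by
  obtain ⟨C, hC⟩ := both_taylor hu x
  refine IsBigO.of_bound (C * |c| ^ 6) ?_
  have hmem : Set.Ioo (0:ℝ) (1 / (|c| + 1)) ∈ nhdsWithin 0 (Set.Ioi 0) :=
    Ioo_mem_nhdsGT_of_mem ⟨le_refl _, by positivity⟩
  filter_upwards [hmem] with h hh
  have h0 : 0 < h := hh.1
  have hch : |c * h| ≤ 1 := by
    rw [abs_mul, abs_of_pos h0]
    have h1 : |c| * h ≤ |c| * (1 / (|c| + 1)) := by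
      apply mul_le_mul_of_nonneg_left hh.2.le (abs_nonneg c)
    refine h1.trans ?_
    rw [mul_one_div, div_le_one (by positivity)]
    linarith
  have := hC (c * h) hch
  rw [Real.norm_eq_abs, Real.norm_eq_abs]
  refine this.trans (le_of_eq ?_)
  rw [abs_mul, abs_of_pos h0, abs_of_pos (by positivity : (0:ℝ) < h ^ 6)]
  ring

theorem quick_five_point_diffusion_expansion (u : ℝ → ℝ) (hu : ContDiff ℝ 6 u)
    (x ν : ℝ) :
    (fun h : ℝ =>
        -ν * (-u (x - 2 * h) + 28 * u (x - h) - 54 * u x + 28 * u (x + h) - u (x + 2 * h))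
            / (24 * h ^ 2)
        - (-ν * iteratedDeriv 2 u x - (ν / 24) * iteratedDeriv 4 u x * h ^ 2))
      =O[nhdsWithin 0 (Set.Ioi 0)] fun h : ℝ => h ^ 4 := by
  set P : ℝ → ℝ := fun t => ∑ k ∈ Finset.range 6, iteratedDeriv k u x * t ^ k / (k ! : ℝ) with hPdef
  set E : ℝ → ℝ → ℝ := fun c h => u (x + c * h) - P (c * h) with hEdef
  have hO : ∀ c : ℝ, (E c) =O[nhdsWithin 0 (Set.Ioi 0)] fun h : ℝ => h ^ 6 := fun c => shiftO hu x c
  have hG : (fun h : ℝ => -(E (-2) h) + 28 * E (-1) h + 28 * E 1 h - E 2 h)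
      =O[nhdsWithin 0 (Set.Ioi 0)] fun h : ℝ => h ^ 6 :=
    ((((hO (-2)).neg_left).add ((hO (-1)).const_mul_left 28)).add
      ((hO 1).const_mul_left 28)).sub (hO 2)
  have hPt : ∀ t : ℝ, P t = u x + iteratedDeriv 1 u x * t + iteratedDeriv 2 u x * t ^ 2 / 2
      + iteratedDeriv 3 u x * t ^ 3 / 6 + iteratedDeriv 4 u x * t ^ 4 / 24
      + iteratedDeriv 5 u x * t ^ 5 / 120 := by
    intro t
    simp only [hPdef]
    norm_num [Finset.sum_range_succ, Nat.factorial, iteratedDeriv_zero]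
  have key : ∀ h : ℝ, h ≠ 0 →
      -ν * (-u (x - 2 * h) + 28 * u (x - h) - 54 * u x + 28 * u (x + h) - u (x + 2 * h))
            / (24 * h ^ 2)
        - (-ν * iteratedDeriv 2 u x - (ν / 24) * iteratedDeriv 4 u x * h ^ 2)
      = -ν * (-(E (-2) h) + 28 * E (-1) h + 28 * E 1 h - E 2 h) / (24 * h ^ 2) := by
    intro h hne
    have hE : ∀ c : ℝ, u (x + c * h) = E c h + P (c * h) := fun c => by simp [hEdef]
    have h1 : u (x - 2 * h) = E (-2) h + P ((-2) * h) := by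
      rw [show x - 2 * h = x + (-2) * h by ring, hE]
    have h2 : u (x - h) = E (-1) h + P ((-1) * h) := by
      rw [show x - h = x + (-1) * h by ring, hE]
    have h3 : u (x + h) = E 1 h + P (1 * h) := by
      rw [show x + h = x + 1 * h by ring, hE]
    have h4 : u (x + 2 * h) = E 2 h + P (2 * h) := hE 2
    rw [h1, h2, h3, h4, hPt, hPt, hPt, hPt]
    field_simp
    ring
  obtain ⟨c, hc0, hcb⟩ := hG.exists_nonneg
  refine IsBigO.of_bound (|ν| * c / 24) ?_
  filter_upwards [hcb.bound, self_mem_nhdsWithin] with h hb hpos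
  have h0 : (0:ℝ) < h := hpos
  have hden : (0:ℝ) < 24 * h ^ 2 := by positivity
  have hGb : |(-(E (-2) h) + 28 * E (-1) h + 28 * E 1 h - E 2 h)| ≤ c * h ^ 6 := by
    have := hb
    rwa [Real.norm_eq_abs, Real.norm_eq_abs, abs_of_pos (by positivity : (0:ℝ) < h ^ 6)] at this
  rw [Real.norm_eq_abs, Real.norm_eq_abs, key h h0.ne',
    abs_of_pos (by positivity : (0:ℝ) < h ^ 4)]
  calc |-ν * (-(E (-2) h) + 28 * E (-1) h + 28 * E 1 h - E 2 h) / (24 * h ^ 2)|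
      = |ν| * |(-(E (-2) h) + 28 * E (-1) h + 28 * E 1 h - E 2 h)| / (24 * h ^ 2) := by
        rw [abs_div, abs_mul, abs_neg, abs_of_pos hden]
    _ ≤ |ν| * (c * h ^ 6) / (24 * h ^ 2) := by gcongr
    _ = |ν| * c / 24 * h ^ 4 := by field_simp
end

section
/- Let u : ℝ → ℝ be of class C⁶, fix x ∈ ℝ, and let ν ∈ ℝ. Then the five-point diffusion scheme approximates the cell-averaged diffusion operator to fourth order: −ν·(−u(x−2h) + 28·u(x−h) − 54·u(x) + 28·u(x+h) − u(x+2h))/(24·h²) + (1/h)·∫_{x−h/2}^{x+h/2} ν·u''(ξ) dξ = O(h⁴) as h → 0⁺. -/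
set_option maxHeartbeats 1000000

open Asymptotics Filter Set MeasureTheory

private noncomputable def g0 (u : ℝ → ℝ) (x h : ℝ) : ℝ :=
  iteratedDeriv 0 u (x - 2*h) - 28 * iteratedDeriv 0 u (x - h) + 54 * iteratedDeriv 0 u x
    - 28 * iteratedDeriv 0 u (x + h) + iteratedDeriv 0 u (x + 2*h)
    + 24 * h * (iteratedDeriv 1 u (x + h/2) - iteratedDeriv 1 u (x - h/2))

private noncomputable def g1 (u : ℝ → ℝ) (x h : ℝ) : ℝ :=
  -2 * iteratedDeriv 1 u (x - 2*h) + 28 * iteratedDeriv 1 u (x - h)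
    - 28 * iteratedDeriv 1 u (x + h) + 2 * iteratedDeriv 1 u (x + 2*h)
    + 12 * h * (iteratedDeriv 2 u (x + h/2) + iteratedDeriv 2 u (x - h/2))
    + 24 * (iteratedDeriv 1 u (x + h/2) - iteratedDeriv 1 u (x - h/2))

private noncomputable def g2 (u : ℝ → ℝ) (x h : ℝ) : ℝ :=
  4 * iteratedDeriv 2 u (x - 2*h) - 28 * iteratedDeriv 2 u (x - h)
    - 28 * iteratedDeriv 2 u (x + h) + 4 * iteratedDeriv 2 u (x + 2*h)
    + 6 * h * (iteratedDeriv 3 u (x + h/2) - iteratedDeriv 3 u (x - h/2))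
    + 24 * (iteratedDeriv 2 u (x + h/2) + iteratedDeriv 2 u (x - h/2))

private noncomputable def g3 (u : ℝ → ℝ) (x h : ℝ) : ℝ :=
  -8 * iteratedDeriv 3 u (x - 2*h) + 28 * iteratedDeriv 3 u (x - h)
    - 28 * iteratedDeriv 3 u (x + h) + 8 * iteratedDeriv 3 u (x + 2*h)
    + 3 * h * (iteratedDeriv 4 u (x + h/2) + iteratedDeriv 4 u (x - h/2))
    + 18 * (iteratedDeriv 3 u (x + h/2) - iteratedDeriv 3 u (x - h/2))

private noncomputable def g4 (u : ℝ → ℝ) (x h : ℝ) : ℝ :=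
  16 * iteratedDeriv 4 u (x - 2*h) - 28 * iteratedDeriv 4 u (x - h)
    - 28 * iteratedDeriv 4 u (x + h) + 16 * iteratedDeriv 4 u (x + 2*h)
    + (3/2) * h * (iteratedDeriv 5 u (x + h/2) - iteratedDeriv 5 u (x - h/2))
    + 12 * (iteratedDeriv 4 u (x + h/2) + iteratedDeriv 4 u (x - h/2))

private noncomputable def g5 (u : ℝ → ℝ) (x h : ℝ) : ℝ :=
  -32 * iteratedDeriv 5 u (x - 2*h) + 28 * iteratedDeriv 5 u (x - h)
    - 28 * iteratedDeriv 5 u (x + h) + 32 * iteratedDeriv 5 u (x + 2*h)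
    + (3/4) * h * (iteratedDeriv 6 u (x + h/2) + iteratedDeriv 6 u (x - h/2))
    + (15/2) * (iteratedDeriv 5 u (x + h/2) - iteratedDeriv 5 u (x - h/2))

private lemma hderiv_iter {u : ℝ → ℝ} (hu : ContDiff ℝ 6 u) {k : ℕ} (hk : k < 6) (t : ℝ) :
    HasDerivAt (iteratedDeriv k u) (iteratedDeriv (k+1) u t) t := by
  have hdiff : Differentiable ℝ (iteratedDeriv k u) :=
    hu.differentiable_iteratedDeriv k (by exact_mod_cast hk)
  have := (hdiff t).hasDerivAt
  rwa [← iteratedDeriv_succ] at this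

private lemma Dcomp {u : ℝ → ℝ} (hu : ContDiff ℝ 6 u) {k : ℕ} (hk : k < 6)
    {φ : ℝ → ℝ} {c h : ℝ} (hφ : HasDerivAt φ c h) :
    HasDerivAt (fun t => iteratedDeriv k u (φ t)) (c * iteratedDeriv (k+1) u (φ h)) h := by
  have hd := hderiv_iter hu hk (φ h)
  simpa [Function.comp_def, mul_comm] using hd.comp h hφ

private lemma hd1 (x h : ℝ) : HasDerivAt (fun t : ℝ => x - 2*t) (-2) h := by
  simpa using ((hasDerivAt_id h).const_mul (2:ℝ)).const_sub x

private lemma hd2 (x h : ℝ) : HasDerivAt (fun t : ℝ => x - t) (-1) h := by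
  simpa using (hasDerivAt_id h).const_sub x

private lemma hd3 (x h : ℝ) : HasDerivAt (fun t : ℝ => x + t) (1) h := by
  simpa using (hasDerivAt_id h).const_add x

private lemma hd4 (x h : ℝ) : HasDerivAt (fun t : ℝ => x + 2*t) (2) h := by
  simpa using ((hasDerivAt_id h).const_mul (2:ℝ)).const_add x

private lemma hd5 (x h : ℝ) : HasDerivAt (fun t : ℝ => x + t/2) (1/2) h := by
  simpa using ((hasDerivAt_id h).div_const (2:ℝ)).const_add x

private lemma hd6 (x h : ℝ) : HasDerivAt (fun t : ℝ => x - t/2) (-(1/2)) h := by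
  simpa using ((hasDerivAt_id h).div_const (2:ℝ)).const_sub x

private lemma hmul_const (c h : ℝ) : HasDerivAt (fun t : ℝ => c * t) c h := by
  simpa using (hasDerivAt_id h).const_mul c

private lemma hasDeriv_g0 {u : ℝ → ℝ} (hu : ContDiff ℝ 6 u) (x h : ℝ) :
    HasDerivAt (fun t => g0 u x t) (g1 u x h) h := by
  simp only [g0, g1]
  have t1 := Dcomp hu (k:=0) (by norm_num) (hd1 x h)
  have t2 := Dcomp hu (k:=0) (by norm_num) (hd2 x h)
  have t4 := Dcomp hu (k:=0) (by norm_num) (hd3 x h)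
  have t5 := Dcomp hu (k:=0) (by norm_num) (hd4 x h)
  have tp := Dcomp hu (k:=1) (by norm_num) (hd5 x h)
  have tm := Dcomp hu (k:=1) (by norm_num) (hd6 x h)
  have big := ((((t1.sub (t2.const_mul 28)).add
      ((hasDerivAt_const h (iteratedDeriv 0 u x)).const_mul 54)).sub
      (t4.const_mul 28)).add t5).add ((hmul_const 24 h).mul (tp.sub tm))
  exact big.congr_deriv (by simp only [Nat.reduceAdd, Pi.sub_apply, Pi.add_apply]; ring)

private lemma hasDeriv_g1 {u : ℝ → ℝ} (hu : ContDiff ℝ 6 u) (x h : ℝ) :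
    HasDerivAt (fun t => g1 u x t) (g2 u x h) h := by
  simp only [g1, g2]
  have t1 := Dcomp hu (k:=1) (by norm_num) (hd1 x h)
  have t2 := Dcomp hu (k:=1) (by norm_num) (hd2 x h)
  have t4 := Dcomp hu (k:=1) (by norm_num) (hd3 x h)
  have t5 := Dcomp hu (k:=1) (by norm_num) (hd4 x h)
  have p2 := Dcomp hu (k:=2) (by norm_num) (hd5 x h)
  have m2 := Dcomp hu (k:=2) (by norm_num) (hd6 x h)
  have p1 := Dcomp hu (k:=1) (by norm_num) (hd5 x h)
  have m1 := Dcomp hu (k:=1) (by norm_num) (hd6 x h)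
  have big := (((((t1.const_mul (-2)).add (t2.const_mul 28)).sub
      (t4.const_mul 28)).add (t5.const_mul 2)).add
      ((hmul_const 12 h).mul (p2.add m2))).add ((p1.sub m1).const_mul 24)
  exact big.congr_deriv (by simp only [Nat.reduceAdd, Pi.sub_apply, Pi.add_apply]; ring)

private lemma hasDeriv_g2 {u : ℝ → ℝ} (hu : ContDiff ℝ 6 u) (x h : ℝ) :
    HasDerivAt (fun t => g2 u x t) (g3 u x h) h := by
  simp only [g2, g3]
  have t1 := Dcomp hu (k:=2) (by norm_num) (hd1 x h)
  have t2 := Dcomp hu (k:=2) (by norm_num) (hd2 x h)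
  have t4 := Dcomp hu (k:=2) (by norm_num) (hd3 x h)
  have t5 := Dcomp hu (k:=2) (by norm_num) (hd4 x h)
  have p3 := Dcomp hu (k:=3) (by norm_num) (hd5 x h)
  have m3 := Dcomp hu (k:=3) (by norm_num) (hd6 x h)
  have p2 := Dcomp hu (k:=2) (by norm_num) (hd5 x h)
  have m2 := Dcomp hu (k:=2) (by norm_num) (hd6 x h)
  have big := (((((t1.const_mul 4).sub (t2.const_mul 28)).sub
      (t4.const_mul 28)).add (t5.const_mul 4)).add
      ((hmul_const 6 h).mul (p3.sub m3))).add ((p2.add m2).const_mul 24)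
  exact big.congr_deriv (by simp only [Nat.reduceAdd, Pi.sub_apply, Pi.add_apply]; ring)

private lemma hasDeriv_g3 {u : ℝ → ℝ} (hu : ContDiff ℝ 6 u) (x h : ℝ) :
    HasDerivAt (fun t => g3 u x t) (g4 u x h) h := by
  simp only [g3, g4]
  have t1 := Dcomp hu (k:=3) (by norm_num) (hd1 x h)
  have t2 := Dcomp hu (k:=3) (by norm_num) (hd2 x h)
  have t4 := Dcomp hu (k:=3) (by norm_num) (hd3 x h)
  have t5 := Dcomp hu (k:=3) (by norm_num) (hd4 x h)
  have p4 := Dcomp hu (k:=4) (by norm_num) (hd5 x h)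
  have m4 := Dcomp hu (k:=4) (by norm_num) (hd6 x h)
  have p3 := Dcomp hu (k:=3) (by norm_num) (hd5 x h)
  have m3 := Dcomp hu (k:=3) (by norm_num) (hd6 x h)
  have big := (((((t1.const_mul (-8)).add (t2.const_mul 28)).sub
      (t4.const_mul 28)).add (t5.const_mul 8)).add
      ((hmul_const 3 h).mul (p4.add m4))).add ((p3.sub m3).const_mul 18)
  exact big.congr_deriv (by simp only [Nat.reduceAdd, Pi.sub_apply, Pi.add_apply]; ring)

private lemma hasDeriv_g4 {u : ℝ → ℝ} (hu : ContDiff ℝ 6 u) (x h : ℝ) :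
    HasDerivAt (fun t => g4 u x t) (g5 u x h) h := by
  simp only [g4, g5]
  have t1 := Dcomp hu (k:=4) (by norm_num) (hd1 x h)
  have t2 := Dcomp hu (k:=4) (by norm_num) (hd2 x h)
  have t4 := Dcomp hu (k:=4) (by norm_num) (hd3 x h)
  have t5 := Dcomp hu (k:=4) (by norm_num) (hd4 x h)
  have p5 := Dcomp hu (k:=5) (by norm_num) (hd5 x h)
  have m5 := Dcomp hu (k:=5) (by norm_num) (hd6 x h)
  have p4 := Dcomp hu (k:=4) (by norm_num) (hd5 x h)
  have m4 := Dcomp hu (k:=4) (by norm_num) (hd6 x h)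
  have big := (((((t1.const_mul 16).sub (t2.const_mul 28)).sub
      (t4.const_mul 28)).add (t5.const_mul 16)).add
      ((hmul_const (3/2) h).mul (p5.sub m5))).add ((p4.add m4).const_mul 12)
  exact big.congr_deriv (by simp only [Nat.reduceAdd, Pi.sub_apply, Pi.add_apply]; ring)

private lemma mvt_step {g g' : ℝ → ℝ} {C : ℝ} {n : ℕ}
    (h0 : g 0 = 0)
    (hd : ∀ t, HasDerivAt g (g' t) t)
    (hb : ∀ t ∈ Icc (-1:ℝ) 1, |g' t| ≤ C * |t| ^ n) :
    ∀ h ∈ Icc (-1:ℝ) 1, |g h| ≤ C * |h| ^ (n + 1) := by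
  have hC : 0 ≤ C := by
    have := (abs_nonneg (g' 1)).trans (hb 1 (by norm_num))
    simpa using this
  intro h hh
  have hseg : uIcc (0:ℝ) h ⊆ Icc (-1:ℝ) 1 :=
    uIcc_subset_Icc (by norm_num) hh
  have key : ∀ t ∈ uIcc (0:ℝ) h, ‖g' t‖ ≤ C * |h| ^ n := by
    intro t ht
    have h1 : |t| ≤ |h| := by
      rcases mem_uIcc.mp ht with ⟨ha, hb2⟩ | ⟨ha, hb2⟩
      · rw [abs_of_nonneg ha, abs_of_nonneg (ha.trans hb2)]; exact hb2
      · rw [abs_of_nonpos hb2, abs_of_nonpos (ha.trans hb2)]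
        exact neg_le_neg ha
    calc ‖g' t‖ = |g' t| := rfl
      _ ≤ C * |t| ^ n := hb t (hseg ht)
      _ ≤ C * |h| ^ n := by gcongr
  have hres := (convex_uIcc (0:ℝ) h).norm_image_sub_le_of_norm_hasDerivWithin_le
    (fun t _ => (hd t).hasDerivWithinAt) key left_mem_uIcc right_mem_uIcc
  rw [h0, sub_zero, sub_zero] at hres
  calc |g h| = ‖g h‖ := rfl
    _ ≤ C * |h| ^ n * ‖h‖ := hres
    _ = C * |h| ^ (n + 1) := by rw [Real.norm_eq_abs, pow_succ]; ring

theorem quick_five_point_diffusion_cell_average (u : ℝ → ℝ) (hu : ContDiff ℝ 6 u)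
    (x ν : ℝ) :
    (fun h : ℝ =>
        -ν * (-u (x - 2 * h) + 28 * u (x - h) - 54 * u x + 28 * u (x + h) - u (x + 2 * h))
            / (24 * h ^ 2)
        + (1 / h) * (∫ ξ in (x - h / 2)..(x + h / 2), ν * iteratedDeriv 2 u ξ))
      =O[nhdsWithin 0 (Set.Ioi 0)] fun h : ℝ => h ^ 4 := by
  -- bound on the 6th derivative
  obtain ⟨C, hC⟩ : ∃ C, ∀ y ∈ Icc (x-2) (x+2), |iteratedDeriv 6 u y| ≤ C := by
    obtain ⟨C, hC⟩ := isCompact_Icc.exists_bound_of_continuousOn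
      ((hu.continuous_iteratedDeriv 6 (le_refl _)).continuousOn (s := Icc (x-2) (x+2)))
    exact ⟨C, fun y hy => hC y hy⟩
  have hC0 : 0 ≤ C := (abs_nonneg _).trans (hC x ⟨by linarith, by linarith⟩)
  -- Lipschitz bound for the 5th derivative
  have hlip : ∀ a ∈ Icc (x-2) (x+2), ∀ b ∈ Icc (x-2) (x+2),
      |iteratedDeriv 5 u a - iteratedDeriv 5 u b| ≤ C * |a - b| := by
    intro a ha b hb
    exact (convex_Icc _ _).norm_image_sub_le_of_norm_hasDerivWithin_le
      (fun t _ => (hderiv_iter hu (by norm_num) t).hasDerivWithinAt)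
      (fun t ht => hC t ht) hb ha
  -- bound on g5
  have hg5 : ∀ h ∈ Icc (-1:ℝ) 1, |g5 u x h| ≤ (300*C) * |h| ^ 1 := by
    intro h hh
    obtain ⟨hh1, hh2⟩ := hh
    have mx : x ∈ Icc (x-2) (x+2) := ⟨by linarith, by linarith⟩
    have m1 : x - 2*h ∈ Icc (x-2) (x+2) := ⟨by linarith, by linarith⟩
    have m2 : x - h ∈ Icc (x-2) (x+2) := ⟨by linarith, by linarith⟩
    have m3 : x + h ∈ Icc (x-2) (x+2) := ⟨by linarith, by linarith⟩
    have m4 : x + 2*h ∈ Icc (x-2) (x+2) := ⟨by linarith, by linarith⟩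
    have m5 : x + h/2 ∈ Icc (x-2) (x+2) := ⟨by linarith, by linarith⟩
    have m6 : x - h/2 ∈ Icc (x-2) (x+2) := ⟨by linarith, by linarith⟩
    have hah : 0 ≤ |h| := abs_nonneg h
    have b1 : |iteratedDeriv 5 u (x - 2*h) - iteratedDeriv 5 u x| ≤ C * (2 * |h|) := by
      have := hlip _ m1 _ mx
      have e : x - 2*h - x = (-2) * h := by ring
      rwa [e, abs_mul, show |(-2:ℝ)| = 2 by norm_num] at this
    have b2 : |iteratedDeriv 5 u (x - h) - iteratedDeriv 5 u x| ≤ C * (2 * |h|) := by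
      have := hlip _ m2 _ mx
      have e : x - h - x = (-1) * h := by ring
      rw [e, abs_mul, show |(-1:ℝ)| = 1 by norm_num, one_mul] at this
      nlinarith
    have b3 : |iteratedDeriv 5 u (x + h) - iteratedDeriv 5 u x| ≤ C * (2 * |h|) := by
      have := hlip _ m3 _ mx
      rw [add_sub_cancel_left] at this
      nlinarith
    have b4 : |iteratedDeriv 5 u (x + 2*h) - iteratedDeriv 5 u x| ≤ C * (2 * |h|) := by
      have := hlip _ m4 _ mx
      have e : x + 2*h - x = 2 * h := by ring
      rwa [e, abs_mul, show |(2:ℝ)| = 2 by norm_num] at this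
    have b5 : |iteratedDeriv 5 u (x + h/2) - iteratedDeriv 5 u x| ≤ C * (2 * |h|) := by
      have := hlip _ m5 _ mx
      have e : x + h/2 - x = h/2 := by ring
      rw [e, abs_div, show |(2:ℝ)| = 2 by norm_num] at this
      nlinarith
    have b6 : |iteratedDeriv 5 u (x - h/2) - iteratedDeriv 5 u x| ≤ C * (2 * |h|) := by
      have := hlip _ m6 _ mx
      have e : x - h/2 - x = (-h)/2 := by ring
      rw [e, abs_div, abs_neg, show |(2:ℝ)| = 2 by norm_num] at this
      nlinarith
    have b7 : |h * iteratedDeriv 6 u (x + h/2)| ≤ |h| * C := by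
      rw [abs_mul]; exact mul_le_mul_of_nonneg_left (hC _ m5) hah
    have b8 : |h * iteratedDeriv 6 u (x - h/2)| ≤ |h| * C := by
      rw [abs_mul]; exact mul_le_mul_of_nonneg_left (hC _ m6) hah
    have hrepr : g5 u x h =
        -32*(iteratedDeriv 5 u (x - 2*h) - iteratedDeriv 5 u x)
        + 28*(iteratedDeriv 5 u (x - h) - iteratedDeriv 5 u x)
        - 28*(iteratedDeriv 5 u (x + h) - iteratedDeriv 5 u x)
        + 32*(iteratedDeriv 5 u (x + 2*h) - iteratedDeriv 5 u x)
        + (3/4)*(h * iteratedDeriv 6 u (x + h/2))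
        + (3/4)*(h * iteratedDeriv 6 u (x - h/2))
        + (15/2)*(iteratedDeriv 5 u (x + h/2) - iteratedDeriv 5 u x)
        - (15/2)*(iteratedDeriv 5 u (x - h/2) - iteratedDeriv 5 u x) := by
      simp only [g5]; ring
    rw [hrepr, pow_one, abs_le]
    obtain ⟨c1, d1⟩ := abs_le.mp b1
    obtain ⟨c2, d2⟩ := abs_le.mp b2
    obtain ⟨c3, d3⟩ := abs_le.mp b3
    obtain ⟨c4, d4⟩ := abs_le.mp b4
    obtain ⟨c5, d5⟩ := abs_le.mp b5
    obtain ⟨c6, d6⟩ := abs_le.mp b6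
    obtain ⟨c7, d7⟩ := abs_le.mp b7
    obtain ⟨c8, d8⟩ := abs_le.mp b8
    constructor <;> nlinarith
  -- vanishing at 0
  have z0 : g0 u x 0 = 0 := by simp only [g0]; norm_num; try ring
  have z1 : g1 u x 0 = 0 := by simp only [g1]; norm_num; try ring
  have z2 : g2 u x 0 = 0 := by simp only [g2]; norm_num; try ring
  have z3 : g3 u x 0 = 0 := by simp only [g3]; norm_num; try ring
  have z4 : g4 u x 0 = 0 := by simp only [g4]; norm_num; try ring
  -- cascade
  have B4 := mvt_step z4 (fun t => hasDeriv_g4 hu x t) hg5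
  have B3 := mvt_step z3 (fun t => hasDeriv_g3 hu x t) B4
  have B2 := mvt_step z2 (fun t => hasDeriv_g2 hu x t) B3
  have B1 := mvt_step z1 (fun t => hasDeriv_g1 hu x t) B2
  have B0 := mvt_step z0 (fun t => hasDeriv_g0 hu x t) B1
  -- assemble
  rw [isBigO_iff]
  refine ⟨|ν| * (300*C) / 24, ?_⟩
  filter_upwards [Ioo_mem_nhdsGT_of_mem (by norm_num : (0:ℝ) ∈ Ico (0:ℝ) 1)] with h hh
  obtain ⟨h0, h1⟩ := hh
  have hne : h ≠ 0 := ne_of_gt h0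
  have hint : (∫ ξ in (x - h/2)..(x + h/2), ν * iteratedDeriv 2 u ξ)
      = ν * (iteratedDeriv 1 u (x + h/2) - iteratedDeriv 1 u (x - h/2)) := by
    rw [intervalIntegral.integral_const_mul]
    congr 1
    apply intervalIntegral.integral_eq_sub_of_hasDerivAt
    · exact fun t _ => hderiv_iter hu (by norm_num) t
    · exact ((hu.differentiable_iteratedDeriv 2 (by norm_num)).continuous).intervalIntegrable _ _
  have heq : -ν * (-u (x - 2 * h) + 28 * u (x - h) - 54 * u x + 28 * u (x + h) - u (x + 2 * h))
            / (24 * h ^ 2)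
        + (1 / h) * (∫ ξ in (x - h/2)..(x + h/2), ν * iteratedDeriv 2 u ξ)
      = ν * g0 u x h / (24 * h ^ 2) := by
    rw [hint]
    simp only [g0, iteratedDeriv_zero]
    field_simp
    ring
  have hb0 : |g0 u x h| ≤ (300*C) * |h| ^ 6 := B0 h ⟨by linarith, by linarith⟩
  have habs : |h| = h := abs_of_pos h0
  rw [Real.norm_eq_abs, Real.norm_eq_abs, heq]
  calc |ν * g0 u x h / (24 * h ^ 2)| = |ν| * |g0 u x h| / (24 * h ^ 2) := by
        rw [abs_div, abs_mul, abs_of_pos (by positivity : (0:ℝ) < 24 * h ^ 2)]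
    _ ≤ |ν| * ((300*C) * h ^ 6) / (24 * h ^ 2) := by
        have hb0' : |g0 u x h| ≤ 300 * C * h ^ 6 := by rwa [habs] at hb0
        gcongr
    _ = |ν| * (300*C) / 24 * h ^ 4 := by field_simp
    _ = |ν| * (300*C) / 24 * |h ^ 4| := by rw [abs_of_pos (pow_pos h0 4)]
end

section
/- Let f : ℝ → ℝ and u : ℝ → ℝ be of class C⁴, fix x ∈ ℝ and κ ∈ ℝ. Then the central flux balance of the κ-scheme approximates the cell-averaged convection operator with a second-order error whose coefficient is proportional to (2κ−1): (1/(2h))·(f(uL(u,h)) + f(uR(u,h)) − f(uL⁻(u,h)) − f(uR⁻(u,h))) = (1/h)·∫_{x−h/2}^{x+h/2} (f∘u)'(ξ) dξ + ((2κ−1)/8)·( f''(u(x))·u'(x)·u''(x) + f'(u(x))·u'''(x) )·h² + O(h³) as h → 0⁺. -/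
open Asymptotics Filter Set MeasureTheory

open Topology

lemma step_isBigO {φ : ℝ → ℝ} (hφ : Differentiable ℝ φ) (h0 : φ 0 = 0) {n : ℕ}
    (hd : deriv φ =O[𝓝 (0:ℝ)] fun h => h ^ n) :
    φ =O[𝓝 (0:ℝ)] fun h => h ^ (n + 1) := by
  rcases hd.exists_pos with ⟨C, hC, hbound⟩
  rw [IsBigOWith] at hbound
  rw [Metric.eventually_nhds_iff] at hbound
  obtain ⟨ε, hε, hb⟩ := hbound
  rw [isBigO_iff]
  refine ⟨C, ?_⟩
  rw [Metric.eventually_nhds_iff]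
  refine ⟨ε, hε, fun {h} hh => ?_⟩
  have key : ‖φ h - φ 0‖ ≤ C * |h| ^ n * ‖h - 0‖ := by
    apply Convex.norm_image_sub_le_of_norm_deriv_le
      (s := Metric.closedBall (0:ℝ) |h|)
      (fun t _ => hφ t)
    · intro t ht
      simp only [Metric.mem_closedBall, Real.dist_eq, sub_zero] at ht
      calc ‖deriv φ t‖ ≤ C * ‖t ^ n‖ := by
            apply hb
            simp only [Real.dist_eq, sub_zero] at hh ⊢
            exact lt_of_le_of_lt ht hh
        _ ≤ C * |h| ^ n := by
            rw [norm_pow, Real.norm_eq_abs]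
            exact mul_le_mul_of_nonneg_left (pow_le_pow_left₀ (abs_nonneg t) ht n) hC.le
    · exact convex_closedBall _ _
    · simp
    · simp [abs_nonneg]
  rw [h0, sub_zero, sub_zero] at key
  calc ‖φ h‖ ≤ C * |h| ^ n * ‖h‖ := key
    _ = C * ‖h ^ (n+1)‖ := by
        rw [norm_pow, Real.norm_eq_abs, pow_succ]; ring

lemma vanishing_isBigO : ∀ (n : ℕ) {φ : ℝ → ℝ}, ContDiff ℝ (n+1 : ℕ) φ →
    (∀ k ≤ n, iteratedDeriv k φ 0 = 0) →
    φ =O[𝓝 (0:ℝ)] fun h => h ^ (n+1)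
  | 0, φ, hφ, hvan => by
    have hdiff : Differentiable ℝ φ := hφ.differentiable (by norm_num)
    have h0 : φ 0 = 0 := by simpa using hvan 0 le_rfl
    apply step_isBigO hdiff h0
    have hc : ContinuousAt (deriv φ) 0 := by
      have h1 : ContDiff ℝ ((0:ℕ∞)+1) φ := by exact_mod_cast hφ
      have := (contDiff_succ_iff_deriv.mp h1).2.2
      exact (this.continuous).continuousAt
    have : (deriv φ) =O[𝓝 (0:ℝ)] (fun _ => (1:ℝ)) := hc.isBigO_one ℝ
    simpa using this
  | (n+1), φ, hφ, hvan => by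
    have hφ' : ContDiff ℝ ((n:ℕ∞)+1+1) φ := by exact_mod_cast hφ
    have hd := (contDiff_succ_iff_deriv.mp hφ')
    have hdiff : Differentiable ℝ φ := hd.1
    have h0 : φ 0 = 0 := by simpa using hvan 0 (by norm_num)
    apply step_isBigO hdiff h0
    apply vanishing_isBigO n
    · exact_mod_cast hd.2.2
    · intro k hk
      rw [← iteratedDeriv_succ']
      exact hvan (k+1) (by omega)

lemma iteratedDeriv_sub' {n : ℕ} {f g : ℝ → ℝ} (hf : ContDiff ℝ n f) (hg : ContDiff ℝ n g)
    (x : ℝ) : iteratedDeriv n (fun y => f y - g y) x = iteratedDeriv n f x - iteratedDeriv n g x := by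
  have := iteratedDerivWithin_sub (Set.mem_univ x) uniqueDiffOn_univ
    hf.contDiffWithinAt (n := n) (g := g) hg.contDiffWithinAt
  simpa [iteratedDerivWithin_univ, Pi.sub_def] using this

lemma cubic_deriv1 (a0 a1 a2 a3 : ℝ) :
    deriv (fun t : ℝ => a0 + a1*t + a2*t^2 + a3*t^3) = fun t => a1 + 2*a2*t + 3*a3*t^2 := by
  funext t
  have H : HasDerivAt (fun t : ℝ => a0 + a1*t + a2*t^2 + a3*t^3)
      (a1 + 2*a2*t + 3*a3*t^2) t := by
    have h1 : HasDerivAt (fun y : ℝ => y) 1 t := hasDerivAt_id t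
    have := (((hasDerivAt_const t a0).add (h1.const_mul a1)).add
      ((hasDerivAt_pow 2 t).const_mul a2)).add ((hasDerivAt_pow 3 t).const_mul a3)
    norm_num at this
    exact this.congr_deriv (by ring)
  exact H.deriv

lemma cubic_deriv2 (a1 a2 a3 : ℝ) :
    deriv (fun t : ℝ => a1 + 2*a2*t + 3*a3*t^2) = fun t => 2*a2 + 6*a3*t := by
  funext t
  have H : HasDerivAt (fun t : ℝ => a1 + 2*a2*t + 3*a3*t^2) (2*a2 + 6*a3*t) t := by
    have h1 : HasDerivAt (fun y : ℝ => y) 1 t := hasDerivAt_id t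
    have := ((hasDerivAt_const t a1).add (h1.const_mul (2*a2))).add
      ((hasDerivAt_pow 2 t).const_mul (3*a3))
    norm_num at this
    exact this.congr_deriv (by ring)
  exact H.deriv

lemma cubic_deriv3 (a2 a3 : ℝ) :
    deriv (fun t : ℝ => 2*a2 + 6*a3*t) = fun _ => (6*a3 : ℝ) := by
  funext t
  have H : HasDerivAt (fun t : ℝ => 2*a2 + 6*a3*t) (6*a3) t := by
    have h1 : HasDerivAt (fun y : ℝ => y) 1 t := hasDerivAt_id t
    have := (hasDerivAt_const t (2*a2)).add (h1.const_mul (6*a3))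
    norm_num at this
    exact this
  exact H.deriv

lemma cubic_contDiff (a0 a1 a2 a3 : ℝ) {n : ℕ∞} :
    ContDiff ℝ n (fun t : ℝ => a0 + a1*t + a2*t^2 + a3*t^3) := by
  apply ContDiff.add
  apply ContDiff.add
  apply ContDiff.add
  · exact contDiff_const
  · exact contDiff_const.mul contDiff_id
  · exact contDiff_const.mul (contDiff_id.pow 2)
  · exact contDiff_const.mul (contDiff_id.pow 3)

lemma shift_contDiff {w : ℝ → ℝ} {n : ℕ∞} (hw : ContDiff ℝ n w) (x c : ℝ) :
    ContDiff ℝ n (fun h : ℝ => w (x + c * h)) :=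
  hw.comp (contDiff_const.add (contDiff_const.mul contDiff_id))

lemma iteratedDeriv_shift {w : ℝ → ℝ} {k : ℕ} (hw : ContDiff ℝ k w) (x c : ℝ) :
    iteratedDeriv k (fun h : ℝ => w (x + c * h)) 0 = c ^ k * iteratedDeriv k w x := by
  have h1 : ContDiff ℝ k (fun z : ℝ => w (x + z)) :=
    hw.comp (contDiff_const.add contDiff_id)
  have h2 := iteratedDeriv_comp_const_mul h1 c
  have h3 := iteratedDeriv_comp_const_add k w x
  calc iteratedDeriv k (fun h : ℝ => w (x + c * h)) 0
      = c ^ k * iteratedDeriv k (fun z : ℝ => w (x + z)) (c * 0) := by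
        rw [congrFun h2 0]
    _ = c ^ k * iteratedDeriv k w x := by rw [congrFun h3 (c*0)]; norm_num

lemma taylor3_shift {w : ℝ → ℝ} (hw : ContDiff ℝ 4 w) (x c : ℝ) :
    (fun h : ℝ => w (x + c * h) - (w x + deriv w x * c * h
      + iteratedDeriv 2 w x / 2 * c ^ 2 * h ^ 2 + iteratedDeriv 3 w x / 6 * c ^ 3 * h ^ 3))
      =O[𝓝 (0:ℝ)] fun h => h ^ 4 := by
  set a0 := w x with ha0
  set a1 := deriv w x * c with ha1
  set a2 := iteratedDeriv 2 w x / 2 * c ^ 2 with ha2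
  set a3 := iteratedDeriv 3 w x / 6 * c ^ 3 with ha3
  have key : (fun h : ℝ => w (x + c * h) - (a0 + a1*h + a2*h^2 + a3*h^3))
      =O[𝓝 (0:ℝ)] fun h => h ^ 4 := by
    have hφ : ContDiff ℝ ((3:ℕ)+1 : ℕ) (fun h : ℝ => w (x + c * h) - (a0 + a1*h + a2*h^2 + a3*h^3)) := by
      have : ((3:ℕ)+1 : ℕ) = (4:ℕ) := rfl
      rw [this]
      exact (shift_contDiff hw x c).sub (cubic_contDiff a0 a1 a2 a3)
    apply vanishing_isBigO 3 hφ
    intro k hk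
    have hsplit : iteratedDeriv k (fun h : ℝ => w (x + c * h) - (a0 + a1*h + a2*h^2 + a3*h^3)) 0
        = iteratedDeriv k (fun h : ℝ => w (x + c * h)) 0
          - iteratedDeriv k (fun h : ℝ => a0 + a1*h + a2*h^2 + a3*h^3) 0 := by
      apply iteratedDeriv_sub'
      · exact (shift_contDiff hw x c).of_le (by exact_mod_cast (by omega : k ≤ 4))
      · exact cubic_contDiff a0 a1 a2 a3
    rw [hsplit, iteratedDeriv_shift (hw.of_le (by exact_mod_cast (by omega : k ≤ 4))) x c]
    have hq1 : iteratedDeriv 1 (fun h : ℝ => a0 + a1*h + a2*h^2 + a3*h^3) 0 = a1 := by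
      rw [iteratedDeriv_one, cubic_deriv1]; norm_num
    have hq2 : iteratedDeriv 2 (fun h : ℝ => a0 + a1*h + a2*h^2 + a3*h^3) 0 = 2*a2 := by
      rw [iteratedDeriv_succ, iteratedDeriv_one, cubic_deriv1, cubic_deriv2]; norm_num
    have hq3 : iteratedDeriv 3 (fun h : ℝ => a0 + a1*h + a2*h^2 + a3*h^3) 0 = 6*a3 := by
      rw [iteratedDeriv_succ, iteratedDeriv_succ, iteratedDeriv_one, cubic_deriv1,
        cubic_deriv2, cubic_deriv3]
    interval_cases k
    · simp [a0]
    · rw [hq1, iteratedDeriv_one, ha1]; ring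
    · rw [hq2, ha2]; ring
    · rw [hq3, ha3]; ring
  apply key.congr' _ (EventuallyEq.refl _ _)
  filter_upwards with h
  ring

lemma taylor1_shift {w : ℝ → ℝ} (hw : ContDiff ℝ 2 w) (x c : ℝ) :
    (fun h : ℝ => w (x + c * h) - (w x + deriv w x * c * h)) =O[𝓝 (0:ℝ)] fun h => h ^ 2 := by
  set a0 := w x
  set a1 := deriv w x * c with ha1
  have key : (fun h : ℝ => w (x + c * h) - (a0 + a1*h)) =O[𝓝 (0:ℝ)] fun h => h ^ 2 := by
    have hφ : ContDiff ℝ ((1:ℕ)+1 : ℕ) (fun h : ℝ => w (x + c * h) - (a0 + a1*h)) := by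
      have h2 : ((1:ℕ)+1 : ℕ) = (2:ℕ) := rfl
      rw [h2]
      exact (shift_contDiff hw x c).sub
        (contDiff_const.add (contDiff_const.mul contDiff_id))
    apply vanishing_isBigO 1 hφ
    intro k hk
    have hsplit := iteratedDeriv_sub'
      (f := fun h : ℝ => w (x + c * h)) (g := fun h : ℝ => a0 + a1*h)
      ((shift_contDiff hw x c).of_le (by exact_mod_cast (by omega : k ≤ 2)))
      (contDiff_const.add (contDiff_const.mul contDiff_id)) 0
    rw [hsplit, iteratedDeriv_shift (hw.of_le (by exact_mod_cast (by omega : k ≤ 2))) x c]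
    have hlin : deriv (fun h : ℝ => a0 + a1*h) = fun _ => a1 := by
      funext t
      exact (((hasDerivAt_const t a0).add ((hasDerivAt_id t).const_mul a1)).congr_deriv
        (by norm_num)).deriv
    have hq1 : iteratedDeriv 1 (fun h : ℝ => a0 + a1*h) 0 = a1 := by
      rw [iteratedDeriv_one, hlin]
    interval_cases k
    · simp [a0]
    · rw [hq1, iteratedDeriv_one, ha1]; ring
  apply key.congr' _ (EventuallyEq.refl _ _)
  filter_upwards with h
  ring

lemma f_linearization {f : ℝ → ℝ} (hf : ContDiff ℝ 4 f) {m δ : ℝ → ℝ}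
    (hm : ContinuousAt m 0) (hδ : δ =O[𝓝 (0:ℝ)] fun h => h ^ 2) :
    (fun h => f (m h + δ h) - f (m h) - deriv f (m h) * δ h) =O[𝓝 (0:ℝ)] fun h => h ^ 4 := by
  have hf4 : ContDiff ℝ ((3:ℕ∞)+1) f := by exact_mod_cast hf
  set u0 := m 0 with hu0
  have hdf3 : ContDiff ℝ 3 (deriv f) := (contDiff_succ_iff_deriv.mp hf4).2.2
  have hdf : Differentiable ℝ (deriv f) := hdf3.differentiable (by norm_num)
  have hdf2cont : ContinuousOn (deriv (deriv f)) (Metric.closedBall u0 1) := by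
    have h3 : ContDiff ℝ ((2:ℕ∞)+1) (deriv f) := by exact_mod_cast hdf3
    exact ((contDiff_succ_iff_deriv.mp h3).2.2).continuous.continuousOn
  obtain ⟨M, hM⟩ := (isCompact_closedBall u0 1).exists_bound_of_continuousOn hdf2cont
  have hM0 : 0 ≤ M := le_trans (norm_nonneg _) (hM u0 (Metric.mem_closedBall_self zero_le_one))
  have lip : ∀ p ∈ Metric.closedBall u0 1, ∀ q ∈ Metric.closedBall u0 1,
      ‖deriv f p - deriv f q‖ ≤ M * ‖p - q‖ := by
    intro p hp q hq
    exact Convex.norm_image_sub_le_of_norm_deriv_le (fun t _ => hdf t)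
      hM (convex_closedBall _ _) hq hp
  have quad : ∀ a ∈ Metric.closedBall u0 1, ∀ b ∈ Metric.closedBall u0 1,
      ‖f b - f a - deriv f a * (b - a)‖ ≤ M * ‖b - a‖ ^ 2 := by
    intro a ha b hb
    have hgd : ∀ t, DifferentiableAt ℝ (fun y => f y - deriv f a * y) t := fun t =>
      (hf.differentiable (by norm_num) t).sub ((differentiable_id.const_mul _) t)
    have hgderiv : ∀ t, deriv (fun y => f y - deriv f a * y) t = deriv f t - deriv f a := by
      intro t
      have H : HasDerivAt (fun y => f y - deriv f a * y) (deriv f t - deriv f a) t := by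
        have := ((hf.differentiable (by norm_num) t).hasDerivAt).sub
          ((hasDerivAt_id t).const_mul (deriv f a))
        exact this.congr_deriv (by ring)
      exact H.deriv
    have seg : segment ℝ a b ⊆ Metric.closedBall u0 1 :=
      (convex_closedBall _ _).segment_subset ha hb
    have key : ‖(f b - deriv f a * b) - (f a - deriv f a * a)‖ ≤ (M * ‖b - a‖) * ‖b - a‖ := by
      apply Convex.norm_image_sub_le_of_norm_deriv_le (s := segment ℝ a b)
        (fun t _ => hgd t) ?_ (convex_segment a b) (left_mem_segment ℝ a b)
        (right_mem_segment ℝ a b)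
      intro t ht
      rw [hgderiv t]
      calc ‖deriv f t - deriv f a‖ ≤ M * ‖t - a‖ := lip t (seg ht) a ha
        _ ≤ M * ‖b - a‖ := by
            apply mul_le_mul_of_nonneg_left _ hM0
            obtain ⟨p, q, hp, hq, hpq, rfl⟩ := ht
            have hq1 : q ≤ 1 := by linarith
            have heq : p • a + q • b - a = q • (b - a) := by
              have hp1 : p = 1 - q := by linarith
              rw [hp1]; module
            rw [heq, norm_smul]
            apply mul_le_of_le_one_left (norm_nonneg _)
            rw [Real.norm_eq_abs, abs_of_nonneg hq]; exact hq1
    calc ‖f b - f a - deriv f a * (b - a)‖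
        = ‖(f b - deriv f a * b) - (f a - deriv f a * a)‖ := by ring_nf
      _ ≤ M * ‖b - a‖ ^ 2 := by rw [sq]; linarith [key]
  rw [isBigO_iff] at hδ ⊢
  obtain ⟨C, hC⟩ := hδ
  refine ⟨M * C ^ 2, ?_⟩
  have hmball : ∀ᶠ h in 𝓝 (0:ℝ), m h ∈ Metric.closedBall u0 (1/2) :=
    hm (Metric.closedBall_mem_nhds u0 (by norm_num))
  have hsmall : ∀ᶠ h in 𝓝 (0:ℝ), C * ‖h ^ 2‖ ≤ 1/2 := by
    have ht : Tendsto (fun h : ℝ => C * ‖h ^ 2‖) (𝓝 0) (𝓝 (C * ‖(0:ℝ) ^ 2‖)) :=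
      ((continuous_pow 2).norm.tendsto 0).const_mul C
    rw [show C * ‖(0:ℝ) ^ 2‖ = 0 by norm_num] at ht
    exact ht.eventually_le_const (by norm_num)
  filter_upwards [hC, hmball, hsmall] with h hδh hmh hsm
  have hmh' : ‖m h - u0‖ ≤ 1/2 := by
    rw [← dist_eq_norm]; exact Metric.mem_closedBall.mp hmh
  have hms : m h ∈ Metric.closedBall u0 1 := by
    rw [Metric.mem_closedBall, dist_eq_norm]; linarith
  have hδle : ‖δ h‖ ≤ 1/2 := le_trans hδh hsm
  have hmds : m h + δ h ∈ Metric.closedBall u0 1 := by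
    rw [Metric.mem_closedBall, dist_eq_norm]
    calc ‖m h + δ h - u0‖ = ‖(m h - u0) + δ h‖ := by ring_nf
      _ ≤ ‖m h - u0‖ + ‖δ h‖ := norm_add_le _ _
      _ ≤ 1 := by linarith
  have hq := quad (m h) hms (m h + δ h) hmds
  simp only [add_sub_cancel_left] at hq
  calc ‖f (m h + δ h) - f (m h) - deriv f (m h) * δ h‖ ≤ M * ‖δ h‖ ^ 2 := hq
    _ ≤ M * (C * ‖h ^ 2‖) ^ 2 := by
        apply mul_le_mul_of_nonneg_left _ hM0
        exact pow_le_pow_left₀ (norm_nonneg _) hδh 2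
    _ = M * C ^ 2 * ‖h ^ 4‖ := by
        rw [norm_pow, norm_pow]; ring

lemma deriv_contDiff3 {f : ℝ → ℝ} (hf : ContDiff ℝ 4 f) : ContDiff ℝ 3 (deriv f) := by
  have hf4 : ContDiff ℝ ((3:ℕ∞)+1) f := by exact_mod_cast hf
  exact (contDiff_succ_iff_deriv.mp hf4).2.2

lemma key_numerator (f u : ℝ → ℝ) (hf : ContDiff ℝ 4 f) (hu : ContDiff ℝ 4 u) (x κ : ℝ) :
    (fun h : ℝ => f (uL κ x u h) + f (uR κ x u h) - f (uLm κ x u h) - f (uRm κ x u h)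
      - 2 * (f (u (x + h/2)) - f (u (x - h/2)))
      - 2 * ((2*κ-1)/8 * (iteratedDeriv 2 f (u x) * deriv u x * iteratedDeriv 2 u x
          + deriv f (u x) * iteratedDeriv 3 u x)) * h^3)
    =O[𝓝 (0:ℝ)] fun h => h ^ 4 := by
  have hu2 : ContDiff ℝ 2 u := hu.of_le (by norm_num)
  have hudiff : Differentiable ℝ u := hu.differentiable (by norm_num)
  -- first order Taylor remainders for u
  have hr1 : (fun h : ℝ => u (x + h) - (u x + deriv u x * h)) =O[𝓝 (0:ℝ)] fun h => h ^ 2 :=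
    (taylor1_shift hu2 x 1).congr_left (fun h => by ring_nf)
  have hrm1 : (fun h : ℝ => u (x - h) - (u x - deriv u x * h)) =O[𝓝 (0:ℝ)] fun h => h ^ 2 :=
    (taylor1_shift hu2 x (-1)).congr_left (fun h => by ring_nf)
  have hr2 : (fun h : ℝ => u (x + 2*h) - (u x + 2 * deriv u x * h)) =O[𝓝 (0:ℝ)] fun h => h ^ 2 :=
    (taylor1_shift hu2 x 2).congr_left (fun h => by ring_nf)
  have hrm2 : (fun h : ℝ => u (x - 2*h) - (u x - 2 * deriv u x * h)) =O[𝓝 (0:ℝ)] fun h => h ^ 2 :=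
    (taylor1_shift hu2 x (-2)).congr_left (fun h => by ring_nf)
  have hrhalf : (fun h : ℝ => u (x + h/2) - (u x + deriv u x * h / 2)) =O[𝓝 (0:ℝ)] fun h => h ^ 2 :=
    (taylor1_shift hu2 x (1/2)).congr_left (fun h => by ring_nf)
  have hrmhalf : (fun h : ℝ => u (x - h/2) - (u x - deriv u x * h / 2)) =O[𝓝 (0:ℝ)] fun h => h ^ 2 :=
    (taylor1_shift hu2 x (-(1/2))).congr_left (fun h => by ring_nf)
  -- third order Taylor remainders for u
  have hR1 : (fun h : ℝ => u (x + h) - (u x + deriv u x * h + iteratedDeriv 2 u x / 2 * h^2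
      + iteratedDeriv 3 u x / 6 * h^3)) =O[𝓝 (0:ℝ)] fun h => h ^ 4 :=
    (taylor3_shift hu x 1).congr_left (fun h => by ring_nf)
  have hRm1 : (fun h : ℝ => u (x - h) - (u x - deriv u x * h + iteratedDeriv 2 u x / 2 * h^2
      - iteratedDeriv 3 u x / 6 * h^3)) =O[𝓝 (0:ℝ)] fun h => h ^ 4 :=
    (taylor3_shift hu x (-1)).congr_left (fun h => by ring_nf)
  have hR2 : (fun h : ℝ => u (x + 2*h) - (u x + 2 * deriv u x * h + 2 * iteratedDeriv 2 u x * h^2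
      + 4/3 * iteratedDeriv 3 u x * h^3)) =O[𝓝 (0:ℝ)] fun h => h ^ 4 :=
    (taylor3_shift hu x 2).congr_left (fun h => by ring_nf)
  have hRm2 : (fun h : ℝ => u (x - 2*h) - (u x - 2 * deriv u x * h + 2 * iteratedDeriv 2 u x * h^2
      - 4/3 * iteratedDeriv 3 u x * h^3)) =O[𝓝 (0:ℝ)] fun h => h ^ 4 :=
    (taylor3_shift hu x (-2)).congr_left (fun h => by ring_nf)
  have hRhalf : (fun h : ℝ => u (x + h/2) - (u x + deriv u x * h / 2
      + iteratedDeriv 2 u x / 8 * h^2 + iteratedDeriv 3 u x / 48 * h^3))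
      =O[𝓝 (0:ℝ)] fun h => h ^ 4 :=
    (taylor3_shift hu x (1/2)).congr_left (fun h => by ring_nf)
  have hRmhalf : (fun h : ℝ => u (x - h/2) - (u x - deriv u x * h / 2
      + iteratedDeriv 2 u x / 8 * h^2 - iteratedDeriv 3 u x / 48 * h^3))
      =O[𝓝 (0:ℝ)] fun h => h ^ 4 :=
    (taylor3_shift hu x (-(1/2))).congr_left (fun h => by ring_nf)
  -- delta estimates
  have hδ1 : (fun h : ℝ => uL κ x u h - u (x + h/2)) =O[𝓝 (0:ℝ)] fun h => h ^ 2 := by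
    have H := ((hr1.const_mul_left (1/2 - (1-κ)/4)).sub
      (hrm1.const_mul_left ((1-κ)/4))).sub hrhalf
    exact H.congr_left (fun h => by simp only [uL]; ring)
  have hδ2 : (fun h : ℝ => uR κ x u h - u (x + h/2)) =O[𝓝 (0:ℝ)] fun h => h ^ 2 := by
    have H := ((hr1.const_mul_left (1/2 + (1-κ)/2)).sub
      (hr2.const_mul_left ((1-κ)/4))).sub hrhalf
    exact H.congr_left (fun h => by simp only [uR]; ring)
  have hδ3 : (fun h : ℝ => uLm κ x u h - u (x - h/2)) =O[𝓝 (0:ℝ)] fun h => h ^ 2 := by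
    have H := ((hrm1.const_mul_left (1/2 + (1-κ)/2)).sub
      (hrm2.const_mul_left ((1-κ)/4))).sub hrmhalf
    exact H.congr_left (fun h => by simp only [uLm, uL]; ring_nf)
  have hδ4 : (fun h : ℝ => uRm κ x u h - u (x - h/2)) =O[𝓝 (0:ℝ)] fun h => h ^ 2 := by
    have H := ((hrm1.const_mul_left (1/2 - (1-κ)/4)).sub
      (hr1.const_mul_left ((1-κ)/4))).sub hrmhalf
    exact H.congr_left (fun h => by simp only [uRm, uR]; ring_nf)
  -- S expansions
  have hFp : (fun h : ℝ => (uL κ x u h + uR κ x u h - 2 * u (x + h/2))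
      - ((2*κ-1)/4 * iteratedDeriv 2 u x * h^2 + (κ/4 - 1/8) * iteratedDeriv 3 u x * h^3))
      =O[𝓝 (0:ℝ)] fun h => h ^ 4 := by
    have H := (((hR1.const_mul_left (1 + (1-κ)/4)).sub
      (hR2.const_mul_left ((1-κ)/4))).sub
      (hRm1.const_mul_left ((1-κ)/4))).sub (hRhalf.const_mul_left 2)
    exact H.congr_left (fun h => by simp only [uL, uR]; ring)
  have hFm : (fun h : ℝ => (uLm κ x u h + uRm κ x u h - 2 * u (x - h/2))
      - ((2*κ-1)/4 * iteratedDeriv 2 u x * h^2 - (κ/4 - 1/8) * iteratedDeriv 3 u x * h^3))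
      =O[𝓝 (0:ℝ)] fun h => h ^ 4 := by
    have H := (((hRm1.const_mul_left (1 + (1-κ)/4)).sub
      (hR1.const_mul_left ((1-κ)/4))).sub
      (hRm2.const_mul_left ((1-κ)/4))).sub (hRmhalf.const_mul_left 2)
    exact H.congr_left (fun h => by simp only [uLm, uRm, uL, uR]; ring_nf)
  -- expansion of deriv f ∘ u at the faces
  have hdf3 : ContDiff ℝ 3 (deriv f) := deriv_contDiff3 hf
  have hw2 : ContDiff ℝ 2 (fun y => deriv f (u y)) :=
    (hdf3.of_le (by norm_num)).comp hu2
  have hD2 : iteratedDeriv 2 f = deriv (deriv f) := by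
    rw [iteratedDeriv_succ, iteratedDeriv_one]
  have hderivw : deriv (fun y => deriv f (u y)) x = iteratedDeriv 2 f (u x) * deriv u x := by
    rw [hD2]
    exact deriv_comp x ((hdf3.differentiable (by norm_num)) (u x)) (hudiff x)
  have hEp : (fun h : ℝ => deriv f (u (x + h/2))
      - (deriv f (u x) + iteratedDeriv 2 f (u x) * deriv u x / 2 * h))
      =O[𝓝 (0:ℝ)] fun h => h ^ 2 := by
    have H := taylor1_shift hw2 x (1/2)
    rw [hderivw] at H
    exact H.congr_left (fun h => by ring_nf)
  have hEm : (fun h : ℝ => deriv f (u (x - h/2))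
      - (deriv f (u x) - iteratedDeriv 2 f (u x) * deriv u x / 2 * h))
      =O[𝓝 (0:ℝ)] fun h => h ^ 2 := by
    have H := taylor1_shift hw2 x (-(1/2))
    rw [hderivw] at H
    exact H.congr_left (fun h => by ring_nf)
  -- linearization remainders
  have hmpc : ContinuousAt (fun h : ℝ => u (x + h/2)) 0 :=
    (hu.continuous.comp (continuous_const.add (continuous_id.div_const 2))).continuousAt
  have hmmc : ContinuousAt (fun h : ℝ => u (x - h/2)) 0 :=
    (hu.continuous.comp (continuous_const.sub (continuous_id.div_const 2))).continuousAt
  have hL1 : (fun h : ℝ => f (uL κ x u h) - f (u (x + h/2))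
      - deriv f (u (x + h/2)) * (uL κ x u h - u (x + h/2))) =O[𝓝 (0:ℝ)] fun h => h ^ 4 := by
    have H := f_linearization hf hmpc hδ1
    refine H.congr_left (fun h => ?_)
    rw [show u (x + h/2) + (uL κ x u h - u (x + h/2)) = uL κ x u h by ring]
  have hL2 : (fun h : ℝ => f (uR κ x u h) - f (u (x + h/2))
      - deriv f (u (x + h/2)) * (uR κ x u h - u (x + h/2))) =O[𝓝 (0:ℝ)] fun h => h ^ 4 := by
    have H := f_linearization hf hmpc hδ2
    refine H.congr_left (fun h => ?_)
    rw [show u (x + h/2) + (uR κ x u h - u (x + h/2)) = uR κ x u h by ring]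
  have hL3 : (fun h : ℝ => f (uLm κ x u h) - f (u (x - h/2))
      - deriv f (u (x - h/2)) * (uLm κ x u h - u (x - h/2))) =O[𝓝 (0:ℝ)] fun h => h ^ 4 := by
    have H := f_linearization hf hmmc hδ3
    refine H.congr_left (fun h => ?_)
    rw [show u (x - h/2) + (uLm κ x u h - u (x - h/2)) = uLm κ x u h by ring]
  have hL4 : (fun h : ℝ => f (uRm κ x u h) - f (u (x - h/2))
      - deriv f (u (x - h/2)) * (uRm κ x u h - u (x - h/2))) =O[𝓝 (0:ℝ)] fun h => h ^ 4 := by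
    have H := f_linearization hf hmmc hδ4
    refine H.congr_left (fun h => ?_)
    rw [show u (x - h/2) + (uRm κ x u h - u (x - h/2)) = uRm κ x u h by ring]
  -- bounded prefactors
  have hPp : (fun h : ℝ => deriv f (u x) + iteratedDeriv 2 f (u x) * deriv u x / 2 * h)
      =O[𝓝 (0:ℝ)] (fun _ => (1:ℝ)) := by
    have : ContinuousAt (fun h : ℝ => deriv f (u x) + iteratedDeriv 2 f (u x) * deriv u x / 2 * h) 0 :=
      (continuous_const.add (continuous_const.mul continuous_id)).continuousAt
    exact this.isBigO_one ℝ
  have hPm : (fun h : ℝ => deriv f (u x) - iteratedDeriv 2 f (u x) * deriv u x / 2 * h)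
      =O[𝓝 (0:ℝ)] (fun _ => (1:ℝ)) := by
    have : ContinuousAt (fun h : ℝ => deriv f (u x) - iteratedDeriv 2 f (u x) * deriv u x / 2 * h) 0 :=
      (continuous_const.sub (continuous_const.mul continuous_id)).continuousAt
    exact this.isBigO_one ℝ
  -- S sums are O(h^2)
  have hSp : (fun h : ℝ => uL κ x u h + uR κ x u h - 2 * u (x + h/2)) =O[𝓝 (0:ℝ)]
      fun h => h ^ 2 := (hδ1.add hδ2).congr_left (fun h => by ring)
  have hSm : (fun h : ℝ => uLm κ x u h + uRm κ x u h - 2 * u (x - h/2)) =O[𝓝 (0:ℝ)]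
      fun h => h ^ 2 := (hδ3.add hδ4).congr_left (fun h => by ring)
  -- product terms
  have hT1p : (fun h : ℝ => (deriv f (u x) + iteratedDeriv 2 f (u x) * deriv u x / 2 * h)
      * ((uL κ x u h + uR κ x u h - 2 * u (x + h/2))
        - ((2*κ-1)/4 * iteratedDeriv 2 u x * h^2 + (κ/4 - 1/8) * iteratedDeriv 3 u x * h^3)))
      =O[𝓝 (0:ℝ)] fun h => h ^ 4 :=
    (hPp.mul hFp).congr (fun h => rfl) (fun h => one_mul _)
  have hT1m : (fun h : ℝ => (deriv f (u x) - iteratedDeriv 2 f (u x) * deriv u x / 2 * h)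
      * ((uLm κ x u h + uRm κ x u h - 2 * u (x - h/2))
        - ((2*κ-1)/4 * iteratedDeriv 2 u x * h^2 - (κ/4 - 1/8) * iteratedDeriv 3 u x * h^3)))
      =O[𝓝 (0:ℝ)] fun h => h ^ 4 :=
    (hPm.mul hFm).congr (fun h => rfl) (fun h => one_mul _)
  have hT2p : (fun h : ℝ => (deriv f (u (x + h/2))
      - (deriv f (u x) + iteratedDeriv 2 f (u x) * deriv u x / 2 * h))
      * (uL κ x u h + uR κ x u h - 2 * u (x + h/2)))
      =O[𝓝 (0:ℝ)] fun h => h ^ 4 :=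
    (hEp.mul hSp).congr (fun h => rfl) (fun h => by ring)
  have hT2m : (fun h : ℝ => (deriv f (u (x - h/2))
      - (deriv f (u x) - iteratedDeriv 2 f (u x) * deriv u x / 2 * h))
      * (uLm κ x u h + uRm κ x u h - 2 * u (x - h/2)))
      =O[𝓝 (0:ℝ)] fun h => h ^ 4 :=
    (hEm.mul hSm).congr (fun h => rfl) (fun h => by ring)
  -- assemble
  have TOTAL := ((((((hL1.add hL2).sub hL3).sub hL4).add hT1p).sub hT1m).add hT2p).sub hT2m
  refine TOTAL.congr_left (fun h => ?_)
  ring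

theorem quick_flux_balance_cell_average_expansion (f u : ℝ → ℝ) (hf : ContDiff ℝ 4 f)
    (hu : ContDiff ℝ 4 u) (x κ : ℝ) :
    (fun h : ℝ =>
        (1 / (2 * h)) * (f (uL κ x u h) + f (uR κ x u h)
          - f (uLm κ x u h) - f (uRm κ x u h))
        - ((1 / h) * (∫ ξ in (x - h / 2)..(x + h / 2), deriv (f ∘ u) ξ)
           + ((2 * κ - 1) / 8) * (iteratedDeriv 2 f (u x) * deriv u x * iteratedDeriv 2 u x
              + deriv f (u x) * iteratedDeriv 3 u x) * h ^ 2))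
      =O[nhdsWithin 0 (Set.Ioi 0)] fun h : ℝ => h ^ 3 := by
  have hfu : ContDiff ℝ 4 (f ∘ u) := hf.comp hu
  have hfudiff : Differentiable ℝ (f ∘ u) := hfu.differentiable (by norm_num)
  have hfuderiv : Continuous (deriv (f ∘ u)) := hfu.continuous_deriv (by norm_num)
  have hFTC : ∀ h : ℝ, (∫ ξ in (x - h/2)..(x + h/2), deriv (f ∘ u) ξ)
      = f (u (x + h/2)) - f (u (x - h/2)) := by
    intro h
    rw [intervalIntegral.integral_deriv_eq_sub (fun t _ => (hfudiff t))
      (hfuderiv.intervalIntegrable _ _)]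
    simp [Function.comp]
  have KEY := (key_numerator f u hf hu x κ).mono
    (nhdsWithin_le_nhds : nhdsWithin (0:ℝ) (Set.Ioi 0) ≤ 𝓝 0)
  have hinv : (fun h : ℝ => 1/(2*h)) =O[nhdsWithin (0:ℝ) (Set.Ioi 0)] fun h => 1/h := by
    rw [isBigO_iff]
    refine ⟨1, ?_⟩
    filter_upwards with h
    rw [one_mul]
    have : |1/(2*h)| = |1/h| / 2 := by
      rw [abs_div, abs_div, abs_mul]
      norm_num
      ring
    simp only [Real.norm_eq_abs]
    rw [this]
    linarith [abs_nonneg (1/h)]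
  have hprod := hinv.mul KEY
  refine hprod.congr' ?_ ?_
  · filter_upwards [self_mem_nhdsWithin] with h hh
    have hh0 : h ≠ 0 := ne_of_gt hh
    rw [hFTC h]
    field_simp
    ring
  · filter_upwards [self_mem_nhdsWithin] with h hh
    have hh0 : h ≠ 0 := ne_of_gt hh
    field_simp
end
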